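/- Let (V, R, α ↦ α∨) be a reduced crystallographic root system of type G₂, i.e. with dim V = 2 and exactly 12 roots, let Q∨ ⊆ V be its coroot lattice, W its Weyl group, and T := V/Q∨ the torus on which W acts (W preserves Q∨). Then: (i) −id_V ∈ W; (ii) the fixed-point set T^{−id} = { t ∈ T : −t = t } has exactly four elements; (iii) for each of the three non-zero elements t ∈ T^{−id}, exactly two of the reflections s_α (α ∈ R, counting s_α = s_{−α} once) fix t in T, and the product of these two reflections equals −id_V; (iv) the three resulting two-element sets of reflections, one for each non-zero t ∈ T^{−id}, are pairwise distinct. -/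

import Mathlib

open Module

/-- A reduced crystallographic root system on a real vector space `V`:
the roots are a finite set of non-zero linear functionals on `V`, each root `α`
has a coroot `α∨ ∈ V` with `α(α∨) = 2`, pairings of roots with coroots are
integers, the reflections `s_α : x ↦ x - α(x)·α∨` (resp. their dual actions
`λ ↦ λ - λ(α∨)·α`) permute the coroots (resp. the roots), and the only roots
proportional to a root `α` are `±α`. -/
structure RedCrystRootSystem (V : Type*) [AddCommGroup V] [Module ℝ V] where
  R : Finset (Module.Dual ℝ V)
  coroot : Module.Dual ℝ V → V
  ne_zero : ∀ α ∈ R, α ≠ 0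
  root_coroot_two : ∀ α ∈ R, α (coroot α) = 2
  crystallographic : ∀ α ∈ R, ∀ β ∈ R, ∃ n : ℤ, β (coroot α) = (n : ℝ)
  refl_root_mem : ∀ α ∈ R, ∀ β ∈ R, β - β (coroot α) • α ∈ R
  refl_coroot_mem : ∀ α ∈ R, ∀ β ∈ R,
    ∃ γ ∈ R, coroot β - α (coroot β) • coroot α = coroot γ
  reduced : ∀ α ∈ R, ∀ β ∈ R, ∀ c : ℝ, β = c • α → β = α ∨ β = -α

namespace RedCrystRootSystem

variable {V : Type*} [AddCommGroup V] [Module ℝ V] (S : RedCrystRootSystem V)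

/-- The reflection `s_α : x ↦ x - α(x)·α∨` associated to a root `α`, as a linear map. -/
def reflMap (α : Module.Dual ℝ V) : V →ₗ[ℝ] V :=
  LinearMap.id - α.smulRight (S.coroot α)

@[simp] lemma reflMap_apply (α : Module.Dual ℝ V) (x : V) :
    S.reflMap α x = x - α x • S.coroot α := rfl

/-- A linear automorphism of `V` is a reflection of the root system if it is
given by `x ↦ x - α(x)·α∨` for some root `α`. -/
def IsReflection (e : V ≃ₗ[ℝ] V) : Prop :=
  ∃ α ∈ S.R, ∀ x : V, e x = x - α x • S.coroot α

/-- The Weyl group: the subgroup of linear automorphisms of `V` generated by the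
reflections `s_α`, `α ∈ R`. -/
def weylGroup : Subgroup (V ≃ₗ[ℝ] V) :=
  Subgroup.closure {e : V ≃ₗ[ℝ] V | S.IsReflection e}

/-- The coroot lattice `Q∨`: the additive subgroup of `V` generated by the coroots. -/
def corootLattice : AddSubgroup V :=
  AddSubgroup.closure (S.coroot '' ↑S.R)

end RedCrystRootSystem

/-- `e` fixes the point `t` of the torus `V ⧸ Λ`. This is expressed by asking for an
additive endomorphism of `V ⧸ Λ` covering `e` (which exists iff `e` preserves `Λ`,
and is then unique) fixing `t`. -/
def FixesInTorus {V : Type*} [AddCommGroup V] [Module ℝ V]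
    (Λ : AddSubgroup V) (e : V ≃ₗ[ℝ] V) (t : V ⧸ Λ) : Prop :=
  ∃ f : (V ⧸ Λ) →+ (V ⧸ Λ),
    (∀ x : V, f (QuotientAddGroup.mk x) = QuotientAddGroup.mk (e x)) ∧ f t = t

namespace RedCrystRootSystem

variable {V : Type*} [AddCommGroup V] [Module ℝ V] (S : RedCrystRootSystem V)

lemma reflMap_invol {α : Module.Dual ℝ V} (hα : α ∈ S.R) (x : V) :
    S.reflMap α (S.reflMap α x) = x := by
  simp only [reflMap_apply, map_sub, map_smul, S.root_coroot_two α hα, smul_eq_mul]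
  module

/-- The reflection attached to a root, as a linear equivalence. -/
noncomputable def sE {α : Module.Dual ℝ V} (hα : α ∈ S.R) : V ≃ₗ[ℝ] V :=
  LinearEquiv.ofLinear (S.reflMap α) (S.reflMap α)
    (by ext x; exact S.reflMap_invol hα x) (by ext x; exact S.reflMap_invol hα x)

@[simp] lemma sE_apply {α : Module.Dual ℝ V} (hα : α ∈ S.R) (x : V) :
    S.sE hα x = x - α x • S.coroot α := rfl

lemma sE_sE {α : Module.Dual ℝ V} (hα : α ∈ S.R) (x : V) :
    S.sE hα (S.sE hα x) = x := S.reflMap_invol hα x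

lemma isReflection_sE {α : Module.Dual ℝ V} (hα : α ∈ S.R) : S.IsReflection (S.sE hα) :=
  ⟨α, hα, fun _ => rfl⟩

lemma sE_mem_weylGroup {α : Module.Dual ℝ V} (hα : α ∈ S.R) : S.sE hα ∈ S.weylGroup :=
  Subgroup.subset_closure (S.isReflection_sE hα)

lemma neg_mem {α : Module.Dual ℝ V} (hα : α ∈ S.R) : -α ∈ S.R := by
  have h := S.refl_root_mem α hα α hα
  rw [S.root_coroot_two α hα] at h
  have : α - (2:ℝ) • α = -α := by module
  rwa [this] at h

lemma coroot_ne_zero {α : Module.Dual ℝ V} (hα : α ∈ S.R) : S.coroot α ≠ 0 := by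
  intro h
  have h2 := S.root_coroot_two α hα
  rw [h, map_zero] at h2
  norm_num at h2

lemma exists_apply_ne_zero {α : Module.Dual ℝ V} (hα : α ∈ S.R) : ∃ x, α x ≠ 0 := by
  by_contra h
  push_neg at h
  exact S.ne_zero α hα (LinearMap.ext fun x => h x)

lemma ne_neg_self {α : Module.Dual ℝ V} (hα : α ∈ S.R) : α ≠ -α := by
  intro h
  obtain ⟨x, hx⟩ := S.exists_apply_ne_zero hα
  have h2 : α x = (-α) x := by rw [← h]
  simp only [LinearMap.neg_apply] at h2
  exact hx (by linarith)

/-- Non-proportionality from being a different line. -/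
lemma not_prop {α β : Module.Dual ℝ V} (hα : α ∈ S.R) (hβ : β ∈ S.R)
    (h1 : β ≠ α) (h2 : β ≠ -α) : ∀ c : ℝ, β ≠ c • α := by
  intro c hc
  rcases S.reduced α hα β hβ c hc with h | h
  · exact h1 h
  · exact h2 h

lemma not_prop' {α β : Module.Dual ℝ V} (hα : α ∈ S.R) (hβ : β ∈ S.R)
    (h1 : β ≠ α) (h2 : β ≠ -α) : ∀ c : ℝ, α ≠ c • β := by
  intro c hc
  rcases eq_or_ne c 0 with rfl | hc0
  · rw [zero_smul] at hc; exact S.ne_zero α hα hc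
  · exact S.not_prop hα hβ h1 h2 c⁻¹ (by rw [hc, smul_smul, inv_mul_cancel₀ hc0, one_smul])

/-- If two reflections agree pointwise, the roots are equal up to sign. -/
lemma root_eq_of_refl_eq {α β : Module.Dual ℝ V} (hα : α ∈ S.R) (hβ : β ∈ S.R)
    (h : ∀ x, x - α x • S.coroot α = x - β x • S.coroot β) : β = α ∨ β = -α := by
  have key : ∀ x, α x • S.coroot α = β x • S.coroot β := by
    intro x
    have hx := h x
    have : x - (x - α x • S.coroot α) = x - (x - β x • S.coroot β) := by rw [hx]
    simpa using this
  have h2 : (2:ℝ) • S.coroot α = β (S.coroot α) • S.coroot β := by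
    have := key (S.coroot α); rwa [S.root_coroot_two α hα] at this
  have hprop : β = (β (S.coroot α) / 2) • α := by
    apply LinearMap.ext
    intro y
    have k1 : α y • ((2:ℝ) • S.coroot α) = (2:ℝ) • (β y • S.coroot β) := by
      rw [smul_comm]; rw [key y]
    rw [h2] at k1
    have k2 : (α y * β (S.coroot α) - 2 * β y) • S.coroot β = 0 := by
      rw [sub_smul]; rw [smul_smul] at k1; rw [k1]; rw [smul_smul]; ring_nf; abel
    have k3 : α y * β (S.coroot α) - 2 * β y = 0 := by
      by_contra hne
      exact S.coroot_ne_zero hβ (by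
        have := congrArg (fun z => (α y * β (S.coroot α) - 2 * β y)⁻¹ • z) k2
        simpa [smul_smul, inv_mul_cancel₀ hne] using this)
    simp only [LinearMap.smul_apply, smul_eq_mul]
    field_simp
    linarith [k3]
  exact S.reduced α hα β hβ _ hprop

end RedCrystRootSystem
namespace RedCrystRootSystem

variable {V : Type*} [AddCommGroup V] [Module ℝ V] (S : RedCrystRootSystem V)

lemma refl_invol_ptwise {e : V ≃ₗ[ℝ] V} (he : S.IsReflection e) : ∀ x, e (e x) = x := by
  obtain ⟨α, hα, hf⟩ := he
  intro x
  have h1 : e x = S.sE hα x := by rw [hf]; rfl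
  have h2 : e (e x) = S.sE hα (S.sE hα x) := by rw [h1, hf (S.sE hα x)]; rfl
  rw [h2, S.sE_sE]

lemma refl_inv_eq {e : V ≃ₗ[ℝ] V} (he : S.IsReflection e) : e⁻¹ = e := by
  apply LinearEquiv.ext
  intro x
  apply e.injective
  show e (e.symm x) = e (e x)
  rw [e.apply_symm_apply, S.refl_invol_ptwise he]

/-- auxiliary subgroup used to prove that the Weyl group permutes the roots -/
private def good : Subgroup (V ≃ₗ[ℝ] V) where
  carrier := {w | (∀ β ∈ S.R, β ∘ₗ (w : V →ₗ[ℝ] V) ∈ S.R) ∧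
      (∀ β ∈ S.R, β ∘ₗ ((w⁻¹ : V ≃ₗ[ℝ] V) : V →ₗ[ℝ] V) ∈ S.R)}
  one_mem' := by
    have h : ∀ β : Module.Dual ℝ V, β ∘ₗ ((1 : V ≃ₗ[ℝ] V) : V →ₗ[ℝ] V) = β := by
      intro β; ext x; rfl
    constructor <;> intro β hβ
    · rwa [h]
    · rw [inv_one]; rwa [h]
  mul_mem' := by
    rintro a b ⟨ha1, ha2⟩ ⟨hb1, hb2⟩
    constructor
    · intro β hβ
      have : β ∘ₗ ((a * b : V ≃ₗ[ℝ] V) : V →ₗ[ℝ] V)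
          = (β ∘ₗ (a : V →ₗ[ℝ] V)) ∘ₗ (b : V →ₗ[ℝ] V) := by ext x; rfl
      rw [this]
      exact hb1 _ (ha1 β hβ)
    · intro β hβ
      have : β ∘ₗ (((a * b)⁻¹ : V ≃ₗ[ℝ] V) : V →ₗ[ℝ] V)
          = (β ∘ₗ ((b⁻¹ : V ≃ₗ[ℝ] V) : V →ₗ[ℝ] V)) ∘ₗ ((a⁻¹ : V ≃ₗ[ℝ] V) : V →ₗ[ℝ] V) := by
        rw [mul_inv_rev]; ext x; rfl
      rw [this]
      exact ha2 _ (hb2 β hβ)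
  inv_mem' := by
    rintro a ⟨ha1, ha2⟩
    refine ⟨ha2, ?_⟩
    rw [inv_inv]
    exact ha1

lemma weyl_acts {w : V ≃ₗ[ℝ] V} (hw : w ∈ S.weylGroup) :
    ∀ β ∈ S.R, β ∘ₗ (w : V →ₗ[ℝ] V) ∈ S.R := by
  have hle : S.weylGroup ≤ S.good := by
    rw [weylGroup, Subgroup.closure_le]
    rintro e ⟨α, hα, hf⟩
    have hinv : e⁻¹ = e := S.refl_inv_eq ⟨α, hα, hf⟩
    have key : ∀ β ∈ S.R, β ∘ₗ (e : V →ₗ[ℝ] V) ∈ S.R := by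
      intro β hβ
      have : β ∘ₗ (e : V →ₗ[ℝ] V) = β - β (S.coroot α) • α := by
        ext x
        simp only [LinearMap.comp_apply, LinearEquiv.coe_coe, hf x, map_sub, map_smul,
          LinearMap.sub_apply, LinearMap.smul_apply, smul_eq_mul]
        ring
      rw [this]
      exact S.refl_root_mem α hα β hβ
    exact ⟨key, by rw [hinv]; exact key⟩
  exact (hle hw).1

lemma exists_other (hcard : 2 < S.R.card) {α : Module.Dual ℝ V} (hα : α ∈ S.R) :
    ∃ β ∈ S.R, β ≠ α ∧ β ≠ -α := by
  classical
  by_contra h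
  push_neg at h
  have hsub : S.R ⊆ ({α, -α} : Finset (Module.Dual ℝ V)) := by
    intro β hβ
    rcases Classical.em (β = α) with h2 | h2
    · simp [h2]
    · simp [h β hβ h2]
  have := Finset.card_le_card hsub
  have h2 : ({α, -α} : Finset (Module.Dual ℝ V)).card ≤ 2 := Finset.card_insert_le _ _ |>.trans (by simp)
  omega

lemma dual_sep [FiniteDimensional ℝ V] (hdim : finrank ℝ V = 2)
    {α β : Module.Dual ℝ V} (hα : α ∈ S.R) (hβ : β ∈ S.R) (h1 : β ≠ α) (h2 : β ≠ -α)
    {y : V} (ha : α y = 0) (hb : β y = 0) : y = 0 := by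
  have li : LinearIndependent ℝ ![β, α] := by
    rw [linearIndependent_fin2]
    refine ⟨by simpa using S.ne_zero α hα, fun c hc => ?_⟩
    exact S.not_prop hα hβ h1 h2 c hc.symm
  have hspan : Submodule.span ℝ (Set.range ![β, α]) = ⊤ := by
    apply Submodule.eq_top_of_finrank_eq
    rw [finrank_span_eq_card li]
    rw [Subspace.dual_finrank_eq, hdim]
    simp
  have hall : ∀ φ : Module.Dual ℝ V, φ y = 0 := by
    intro φ
    have hmem : φ ∈ Submodule.span ℝ (Set.range ![β, α]) := by rw [hspan]; trivial
    induction hmem using Submodule.span_induction with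
    | mem z hz =>
      obtain ⟨i, rfl⟩ := hz
      fin_cases i <;> simpa
    | zero => simp
    | add f g _ _ hf hg => simp [hf, hg]
    | smul c f _ hf => simp [hf]
  exact (Module.forall_dual_apply_eq_zero_iff ℝ y).mp hall

lemma finite_weyl [FiniteDimensional ℝ V] (hdim : finrank ℝ V = 2) (hcard : S.R.card = 12) :
    Finite S.weylGroup := by
  have h3 : 2 < S.R.card := by omega
  have hne : S.R.Nonempty := Finset.card_pos.mp (by omega)
  obtain ⟨α, hα⟩ := hne
  obtain ⟨β, hβ, h1, h2⟩ := S.exists_other h3 hα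
  classical
  have : Finite ({x // x ∈ S.R} → {x // x ∈ S.R}) := by infer_instance
  apply Finite.of_injective (fun (w : S.weylGroup) =>
    (fun b : {x // x ∈ S.R} => (⟨b.1 ∘ₗ ((w : V ≃ₗ[ℝ] V) : V →ₗ[ℝ] V),
      S.weyl_acts w.2 b.1 b.2⟩ : {x // x ∈ S.R})))
  intro w1 w2 hw
  have key : ∀ γ ∈ S.R, ∀ x : V, γ ((w1 : V ≃ₗ[ℝ] V) x) = γ ((w2 : V ≃ₗ[ℝ] V) x) := by
    intro γ hγ x
    have := congrFun hw ⟨γ, hγ⟩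
    have := congrArg Subtype.val this
    exact congrFun (congrArg (fun (f : Module.Dual ℝ V) => (f : V → ℝ)) this) x
  apply Subtype.ext
  apply LinearEquiv.ext
  intro x
  have hy : ((w1 : V ≃ₗ[ℝ] V) x - (w2 : V ≃ₗ[ℝ] V) x) = 0 := by
    apply S.dual_sep hdim hα hβ h1 h2
    · rw [map_sub, key α hα x, sub_self]
    · rw [map_sub, key β hβ x, sub_self]
  have := sub_eq_zero.mp hy
  exact this

lemma exists_pow_eq_one [FiniteDimensional ℝ V] (hdim : finrank ℝ V = 2)
    (hcard : S.R.card = 12) {w : V ≃ₗ[ℝ] V} (hw : w ∈ S.weylGroup) :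
    ∃ N : ℕ, 0 < N ∧ w ^ N = 1 := by
  have : Finite S.weylGroup := S.finite_weyl hdim hcard
  refine ⟨orderOf (⟨w, hw⟩ : S.weylGroup), orderOf_pos _, ?_⟩
  have := pow_orderOf_eq_one (⟨w, hw⟩ : S.weylGroup)
  have h2 := congrArg (Subtype.val) this
  rwa [SubgroupClass.coe_pow] at h2

lemma unip [FiniteDimensional ℝ V] (hdim : finrank ℝ V = 2) (hcard : S.R.card = 12)
    {w : V ≃ₗ[ℝ] V} (hw : w ∈ S.weylGroup) {φ : Module.Dual ℝ V} {v : V}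
    (hfor : ∀ x, w x = x + φ x • v) (hov : φ v = 0) : ∀ x, φ x • v = 0 := by
  have key : ∀ (k : ℕ) (x : V), (w ^ k) x = x + ((k : ℝ) * φ x) • v := by
    intro k
    induction k with
    | zero => intro x; simp
    | succ k ih =>
      intro x
      have : w ^ (k+1) = w ^ k * w := pow_succ w k
      rw [this]
      have h1 : (w ^ k * w) x = (w ^ k) (w x) := rfl
      rw [h1, ih (w x), hfor x]
      have hφ : φ (x + φ x • v) = φ x := by
        rw [map_add, map_smul, hov, smul_eq_mul, mul_zero, add_zero]
      rw [hφ]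
      push_cast
      module
  obtain ⟨N, hN, hNw⟩ := S.exists_pow_eq_one hdim hcard hw
  intro x
  have := key N x
  rw [hNw] at this
  have h0 : ((N : ℝ) * φ x) • v = 0 := by
    have h1 : x + ((N:ℝ) * φ x) • v = x + 0 := by
      rw [add_zero]; exact this.symm
    exact (add_left_cancel h1)
  rw [mul_smul] at h0
  rcases smul_eq_zero.mp h0 with h | h
  · exfalso; have : (N:ℝ) ≠ 0 := Nat.cast_ne_zero.mpr hN.ne'
    exact this h
  · exact h

end RedCrystRootSystem
namespace RedCrystRootSystem

variable {V : Type*} [AddCommGroup V] [Module ℝ V] (S : RedCrystRootSystem V)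

lemma pair_zero {a b : V} (hli : LinearIndependent ℝ ![a, b]) {s t : ℝ}
    (h : s • a + t • b = 0) : s = 0 ∧ t = 0 := by
  have h2 := Fintype.linearIndependent_iff.mp hli ![s, t] (by
    simp [Fin.sum_univ_two]
    exact h)
  exact ⟨h2 0, h2 1⟩

/-- Chebyshev-like integer sequence. -/
def cheb (t : ℤ) : ℕ → ℤ
  | 0 => 0
  | 1 => 1
  | (k+2) => t * cheb t (k+1) - cheb t k

@[simp] lemma cheb_zero (t : ℤ) : cheb t 0 = 0 := rfl
@[simp] lemma cheb_one (t : ℤ) : cheb t 1 = 1 := rfl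
lemma cheb_two (t : ℤ) (k : ℕ) : cheb t (k+2) = t * cheb t (k+1) - cheb t k := rfl

lemma cheb_pow {A : Module.End ℝ V} {t : ℤ} (hCH : A * A = (t : ℝ) • A - 1) :
    ∀ k, A ^ (k+1) = ((cheb t (k+1) : ℤ) : ℝ) • A - ((cheb t k : ℤ) : ℝ) • 1 := by
  intro k
  induction k with
  | zero => simp
  | succ k ih =>
    have h1 : A ^ (k+2) = A ^ (k+1) * A := pow_succ A (k+1)
    rw [h1, ih]
    rw [sub_mul, smul_mul_assoc, smul_mul_assoc, one_mul, hCH, cheb_two]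
    push_cast
    rw [smul_sub, smul_smul]
    ring_nf
    module

lemma cheb_pos {t : ℤ} (ht : 2 ≤ t) : ∀ k, cheb t k < cheb t (k+1) ∧ 0 ≤ cheb t k := by
  intro k
  induction k with
  | zero => simp
  | succ k ih =>
    obtain ⟨h1, h2⟩ := ih
    constructor
    · rw [cheb_two]
      nlinarith
    · omega

lemma scalar_of_finorder {A : Module.End ℝ V} {t : ℤ} (hCH : A * A = (t : ℝ) • A - 1)
    (ht : 2 ≤ t) (hfin : ∃ N, 0 < N ∧ A ^ N = 1) : ∃ c : ℝ, A = c • 1 := by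
  obtain ⟨N, hN, hA⟩ := hfin
  obtain ⟨M, rfl⟩ : ∃ M, N = M + 1 := ⟨N - 1, by omega⟩
  have h1 := cheb_pow hCH M
  rw [hA] at h1
  have hpos : 0 < cheb t (M+1) := by
    have := cheb_pos ht M
    omega
  have h2 : ((cheb t (M+1) : ℤ) : ℝ) • A = ((1 : ℝ) + ((cheb t M : ℤ) : ℝ)) • 1 := by
    have := h1.symm
    rw [sub_eq_iff_eq_add] at this
    rw [this]
    module
  refine ⟨((1 : ℝ) + ((cheb t M : ℤ) : ℝ)) / ((cheb t (M+1) : ℤ) : ℝ), ?_⟩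
  have hne : ((cheb t (M+1) : ℤ) : ℝ) ≠ 0 := by
    exact_mod_cast hpos.ne'
  have := congrArg (fun z => (((cheb t (M+1) : ℤ) : ℝ))⁻¹ • z) h2
  simp only [smul_smul, inv_mul_cancel₀ hne, one_smul] at this
  rw [this]
  rw [div_eq_inv_mul]

lemma coroot_indep [FiniteDimensional ℝ V] (hdim : finrank ℝ V = 2) (hcard : S.R.card = 12)
    {α β : Module.Dual ℝ V} (hα : α ∈ S.R) (hβ : β ∈ S.R)
    (hne1 : β ≠ α) (hne2 : β ≠ -α) :
    LinearIndependent ℝ ![S.coroot α, S.coroot β] := by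
  rw [linearIndependent_fin2]
  refine ⟨by simpa using S.coroot_ne_zero hβ, fun lam hlam => ?_⟩
  simp only [Matrix.cons_val_one, Matrix.head_cons, Matrix.cons_val_zero] at hlam
  -- hlam : lam • coroot β = coroot α
  have hlam0 : lam ≠ 0 := by
    intro h
    rw [h, zero_smul] at hlam
    exact S.coroot_ne_zero hα hlam.symm
  set a := S.coroot α with ha_def
  set b := S.coroot β with hb_def
  have hba : β a = 2 * lam := by
    rw [← hlam, map_smul, smul_eq_mul, S.root_coroot_two β hβ]; ring
  have hab : α b = 2 / lam := by
    have : α a = 2 := S.root_coroot_two α hα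
    rw [← hlam, map_smul, smul_eq_mul] at this
    field_simp
    linarith
  -- consider w = s_β ∘ s_α ; w x = x + φ(x) • b with φ = (lam) • β ... compute
  set φ : Module.Dual ℝ V := (β (S.coroot α) - lam) • α - β with hφ
  have hw : ∀ x, (S.sE hβ) ((S.sE hα) x) = x + φ x • b := by
    intro x
    simp only [sE_apply, map_sub, map_smul, hφ, LinearMap.sub_apply, LinearMap.smul_apply,
      smul_eq_mul, ← ha_def, ← hb_def, ← hlam]
    module
  have hφb : φ b = 0 := by
    simp only [hφ, LinearMap.sub_apply, LinearMap.smul_apply, smul_eq_mul, ← hb_def]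
    rw [hba, hab, S.root_coroot_two β hβ]
    field_simp
    ring
  have := S.unip hdim hcard (S.weylGroup.mul_mem (S.sE_mem_weylGroup hβ) (S.sE_mem_weylGroup hα))
    (φ := φ) (v := b) (by intro x; exact hw x) hφb
  have hφ0 : φ = 0 := by
    apply LinearMap.ext
    intro x
    rcases smul_eq_zero.mp (this x) with h | h
    · exact h
    · exact absurd h (S.coroot_ne_zero hβ)
  -- φ = 0 means β = (βa - lam) • α, contradicting non-proportionality
  have hβprop : β = (β a - lam) • α := by
    have h0 : (β a - lam) • α - β = 0 := by rw [← hφ]; exact hφ0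
    have := sub_eq_zero.mp h0
    exact this.symm
  exact S.not_prop hα hβ hne1 hne2 _ hβprop

end RedCrystRootSystem
namespace RedCrystRootSystem

variable {V : Type*} [AddCommGroup V] [Module ℝ V] (S : RedCrystRootSystem V)

/-- Main dichotomy for a pair of non-proportional roots: either the product of
pairings is between 1 and 3, or the two roots are orthogonal and the product of the
two reflections is `-id`. -/
lemma rot [FiniteDimensional ℝ V] (hdim : finrank ℝ V = 2) (hcard : S.R.card = 12)
    {α β : Module.Dual ℝ V} (hα : α ∈ S.R) (hβ : β ∈ S.R)
    (hne1 : β ≠ α) (hne2 : β ≠ -α) {n m : ℤ}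
    (hn : β (S.coroot α) = (n : ℝ)) (hm : α (S.coroot β) = (m : ℝ)) :
    (1 ≤ n * m ∧ n * m ≤ 3) ∨
      (n = 0 ∧ m = 0 ∧ ∀ x, S.sE hα (S.sE hβ x) = -x) := by
  classical
  set a := S.coroot α with ha_def
  set b := S.coroot β with hb_def
  have hli : LinearIndependent ℝ ![a, b] := S.coroot_indep hdim hcard hα hβ hne1 hne2
  set u : Module.End ℝ V := (S.reflMap α) * (S.reflMap β) with hu
  have hux : ∀ x, u x = x - β x • b - α x • a + ((m : ℝ) * β x) • a := by
    intro x
    show S.reflMap α (S.reflMap β x) = _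
    simp only [reflMap_apply, map_sub, map_smul, ← ha_def, ← hb_def, hm, smul_eq_mul]
    module
  have hua : u a = (((n : ℝ) * m) - 1) • a - (n : ℝ) • b := by
    rw [hux a, S.root_coroot_two α hα, hn]
    module
  have hub : u b = (m : ℝ) • a - b := by
    rw [hux b, S.root_coroot_two β hβ, hm]
    module
  -- Cayley–Hamilton
  have hB : Fintype.card (Fin 2) = finrank ℝ V := by simp [hdim]
  have hNontriv : Nontrivial V := by
    rcases S.exists_apply_ne_zero hα with ⟨x, hx⟩
    exact ⟨x, 0, fun h => hx (by rw [h, map_zero])⟩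
  let B : Basis (Fin 2) ℝ V := basisOfLinearIndependentOfCardEqFinrank hli hB
  have hB0 : B 0 = a := by
    show (basisOfLinearIndependentOfCardEqFinrank hli hB) 0 = a
    rw [coe_basisOfLinearIndependentOfCardEqFinrank]; rfl
  have hB1 : B 1 = b := by
    show (basisOfLinearIndependentOfCardEqFinrank hli hB) 1 = b
    rw [coe_basisOfLinearIndependentOfCardEqFinrank]; rfl
  have hCH : u * u = ((n * m - 2 : ℤ) : ℝ) • u - 1 := by
    apply B.ext
    intro i
    fin_cases i
    · show (u * u) (B 0) = (((n * m - 2 : ℤ) : ℝ) • u - 1) (B 0)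
      rw [hB0]
      have l1 : (u * u) a = u (u a) := rfl
      rw [l1, hua, map_sub, map_smul, map_smul, hua, hub]
      have l2 : (((n * m - 2 : ℤ) : ℝ) • u - 1) a = ((n * m - 2 : ℤ) : ℝ) • (u a) - a := rfl
      rw [l2, hua]
      push_cast
      module
    · show (u * u) (B 1) = (((n * m - 2 : ℤ) : ℝ) • u - 1) (B 1)
      rw [hB1]
      have l1 : (u * u) b = u (u b) := rfl
      rw [l1, hub, map_sub, map_smul, hua, hub]
      have l2 : (((n * m - 2 : ℤ) : ℝ) • u - 1) b = ((n * m - 2 : ℤ) : ℝ) • (u b) - b := rfl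
      rw [l2, hub]
      push_cast
      module
  -- finite order
  have hfin : ∃ N, 0 < N ∧ u ^ N = 1 := by
    obtain ⟨N, hN, hw⟩ := S.exists_pow_eq_one hdim hcard
      (S.weylGroup.mul_mem (S.sE_mem_weylGroup hα) (S.sE_mem_weylGroup hβ))
    refine ⟨N, hN, ?_⟩
    have key : ∀ (k : ℕ) (x : V), (u ^ k) x = ((S.sE hα * S.sE hβ) ^ k) x := by
      intro k
      induction k with
      | zero => intro x; rfl
      | succ k ih =>
        intro x
        rw [pow_succ, pow_succ]
        have e1 : (u ^ k * u) x = (u ^ k) (u x) := rfl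
        have e2 : (((S.sE hα * S.sE hβ) ^ k) * (S.sE hα * S.sE hβ)) x
            = ((S.sE hα * S.sE hβ) ^ k) ((S.sE hα * S.sE hβ) x) := rfl
        rw [e1, e2]
        have e3 : u x = (S.sE hα * S.sE hβ) x := rfl
        rw [e3, ih]
    apply LinearMap.ext
    intro x
    rw [key N x, hw]
    rfl
  set τ : ℤ := n * m - 2 with hτ
  rcases le_or_gt 2 τ with h2 | h2
  · -- impossible
    exfalso
    obtain ⟨c, hc⟩ := scalar_of_finorder hCH h2 hfin
    have hcb : u b = c • b := by rw [hc]; rfl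
    rw [hub] at hcb
    have hz : (m : ℝ) • a + (-1 - c) • b = 0 := by
      have e : (m : ℝ) • a + (-1 - c) • b = ((m : ℝ) • a - b) - c • b := by module
      rw [e, hcb, sub_self]
    obtain ⟨hm0, hc0⟩ := pair_zero hli hz
    have hca : u a = c • a := by rw [hc]; rfl
    rw [hua] at hca
    have hz2 : (((n:ℝ) * m - 1) - c) • a + (-(n:ℝ)) • b = 0 := by
      have e : (((n:ℝ) * m - 1) - c) • a + (-(n:ℝ)) • b
          = ((((n:ℝ) * m) - 1) • a - (n:ℝ) • b) - c • a := by module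
      rw [e, hca, sub_self]
    obtain ⟨h1, hn0⟩ := pair_zero hli hz2
    have : (n : ℝ) = 0 := by linarith [neg_eq_zero.mp hn0]
    have hnz : n = 0 := by exact_mod_cast this
    have hnm : n * m = 0 := by rw [hnz]; ring
    omega
  rcases le_or_gt τ (-2) with h3 | h3
  · -- orthogonal case
    have hCH' : (-u) * (-u) = ((-τ : ℤ) : ℝ) • (-u) - 1 := by
      rw [neg_mul_neg, hCH]
      push_cast
      module
    have hfin' : ∃ N, 0 < N ∧ (-u) ^ N = 1 := by
      obtain ⟨N, hN, hw⟩ := hfin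
      refine ⟨N * 2, by omega, ?_⟩
      rw [pow_mul, neg_pow, hw, mul_one]
      have e : (((-1 : Module.End ℝ V)) ^ N) ^ 2 = (((-1 : Module.End ℝ V)) ^ 2) ^ N := by
        rw [← pow_mul, ← pow_mul, Nat.mul_comm]
      rw [e, neg_one_sq, one_pow]
    obtain ⟨c, hc⟩ := scalar_of_finorder hCH' (by omega) hfin'
    have hcb : -(u b) = c • b := by rw [show -(u b) = (-u) b from rfl, hc]; rfl
    rw [hub] at hcb
    have hz : (-(m : ℝ)) • a + (1 - c) • b = 0 := by
      have e : (-(m : ℝ)) • a + (1 - c) • b = (-((m : ℝ) • a - b)) - c • b := by module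
      rw [e, hcb, sub_self]
    obtain ⟨hm0, hc0⟩ := pair_zero hli hz
    have hm0' : m = 0 := by exact_mod_cast neg_eq_zero.mp hm0
    have hc1 : c = 1 := by linarith
    have hca : -(u a) = c • a := by rw [show -(u a) = (-u) a from rfl, hc]; rfl
    rw [hua] at hca
    have hz2 : (c - 1 + (n:ℝ) * m) • a + (-(n:ℝ)) • b = 0 := by
      have e : (c - 1 + (n:ℝ) * m) • a + (-(n:ℝ)) • b
          = c • a - (-((((n:ℝ) * m) - 1) • a - (n:ℝ) • b)) := by module
      rw [e, hca, sub_self]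
    obtain ⟨h1, hn0⟩ := pair_zero hli hz2
    have hn0' : n = 0 := by
      have : (n:ℝ) = 0 := neg_eq_zero.mp hn0
      exact_mod_cast this
    refine Or.inr ⟨hn0', hm0', ?_⟩
    intro x
    have : u x = (-1 : ℝ) • x := by
      have : u = -(c • 1) := by
        rw [← hc]; simp
      rw [this, hc1]
      show -((1:ℝ) • (1 : Module.End ℝ V)) x = (-1 : ℝ) • x
      simp
    have e3 : (S.sE hα) ((S.sE hβ) x) = u x := rfl
    rw [e3, this]
    simp
  · left
    constructor <;> omega

lemma coroot_neg [FiniteDimensional ℝ V] (hdim : finrank ℝ V = 2) (hcard : S.R.card = 12)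
    {α : Module.Dual ℝ V} (hα : α ∈ S.R) : S.coroot (-α) = - S.coroot α := by
  have hnα : -α ∈ S.R := S.neg_mem hα
  set a := S.coroot α
  set c' := S.coroot (-α) with hc'
  have hac' : α c' = -2 := by
    have := S.root_coroot_two (-α) hnα
    simp only [LinearMap.neg_apply] at this
    linarith
  have hw : ∀ x, (S.sE hα) ((S.sE hnα) x) = x + α x • (c' + a) := by
    intro x
    simp only [sE_apply, LinearMap.neg_apply, map_sub, map_add, map_smul, map_neg, smul_eq_mul,
      hac', show α (S.coroot (-α)) = -2 from hac']
    module
  have hov : α (c' + a) = 0 := by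
    rw [map_add, hac', S.root_coroot_two α hα]; ring
  have := S.unip hdim hcard
    (S.weylGroup.mul_mem (S.sE_mem_weylGroup hα) (S.sE_mem_weylGroup hnα)) hw hov
  obtain ⟨x, hx⟩ := S.exists_apply_ne_zero hα
  have h0 := this x
  rcases smul_eq_zero.mp h0 with h | h
  · exact absurd h hx
  · have : c' = -a := by
      have := add_eq_zero_iff_eq_neg.mp h
      exact this
    rw [hc'] at this
    exact this

end RedCrystRootSystem
lemma even_card_of_fpf {X : Type*} [DecidableEq X] :
    ∀ (n : ℕ) (s : Finset X) (f : X → X), s.card = n → (∀ x ∈ s, f x ∈ s) →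
    (∀ x ∈ s, f (f x) = x) → (∀ x ∈ s, f x ≠ x) → Even n := by
  intro n
  induction n using Nat.strong_induction_on with
  | _ n ih =>
    intro s f hcard hmap hinv hfpf
    rcases s.eq_empty_or_nonempty with rfl | ⟨x, hx⟩
    · rw [← hcard]; exact Even.zero
    · have hfx : f x ∈ s := hmap x hx
      have hfxx : f x ≠ x := hfpf x hx
      have hsub : ({x, f x} : Finset X) ⊆ s := by
        intro y hy
        rcases Finset.mem_insert.mp hy with rfl | hy
        · exact hx
        · rw [Finset.mem_singleton.mp hy]; exact hfx
      have hge2 : 2 ≤ n := by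
        have h2 : ({x, f x} : Finset X).card = 2 := by
          rw [Finset.card_insert_of_notMem (by simp [Ne.symm hfxx]), Finset.card_singleton]
        calc 2 = ({x, f x} : Finset X).card := h2.symm
          _ ≤ s.card := Finset.card_le_card hsub
          _ = n := hcard
      set s' := (s.erase x).erase (f x) with hs'
      have hmem' : ∀ y, y ∈ s' ↔ (y ∈ s ∧ y ≠ x ∧ y ≠ f x) := by
        intro y
        simp only [hs', Finset.mem_erase]
        tauto
      have hcard' : s'.card = n - 2 := by
        rw [hs', Finset.card_erase_of_mem (by
          rw [Finset.mem_erase]; exact ⟨hfxx, hfx⟩), Finset.card_erase_of_mem hx, hcard]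
        omega
      have heven : Even (n - 2) := by
        apply ih (n-2) (by omega) s' f hcard'
        · intro y hy
          obtain ⟨hys, hyx, hyfx⟩ := (hmem' y).mp hy
          rw [hmem']
          refine ⟨hmap y hys, ?_, ?_⟩
          · intro h; apply hyfx; rw [← hinv y hys, h]
          · intro h
            apply hyx
            have := congrArg f h
            rw [hinv y hys, hinv x hx] at this
            exact this
        · intro y hy; exact hinv y ((hmem' y).mp hy).1
        · intro y hy; exact hfpf y ((hmem' y).mp hy).1
      obtain ⟨k, hk⟩ := heven
      exact ⟨k + 1, by omega⟩

namespace RedCrystRootSystem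

variable {V : Type*} [AddCommGroup V] [Module ℝ V] (S : RedCrystRootSystem V)

lemma exists_orth [FiniteDimensional ℝ V] (hdim : finrank ℝ V = 2) (hcard : S.R.card = 12)
    {α : Module.Dual ℝ V} (hα : α ∈ S.R) :
    ∃ β ∈ S.R, β ≠ α ∧ β ≠ -α ∧ β (S.coroot α) = 0 := by
  classical
  by_contra hcon
  push_neg at hcon
  set a := S.coroot α with ha
  set g : Module.Dual ℝ V → Module.Dual ℝ V := fun β => β - β a • α with hg
  have hgg : ∀ β, g (g β) = β := by
    intro β
    simp only [hg, map_sub, map_smul, LinearMap.sub_apply, LinearMap.smul_apply, smul_eq_mul,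
      ← ha, S.root_coroot_two α hα]
    apply LinearMap.ext; intro y
    simp only [LinearMap.sub_apply, LinearMap.smul_apply, smul_eq_mul, LinearMap.smul_apply]
    rw [show α a = 2 from S.root_coroot_two α hα]; ring
  have hgneg : ∀ β, g (-β) = - g β := by
    intro β
    simp only [hg]
    apply LinearMap.ext; intro y
    simp only [LinearMap.sub_apply, LinearMap.neg_apply, LinearMap.smul_apply, smul_eq_mul]
    ring
  have hgα : g α = -α := by
    simp only [hg, ← ha, S.root_coroot_two α hα]
    apply LinearMap.ext; intro y
    simp only [LinearMap.sub_apply, LinearMap.smul_apply, LinearMap.neg_apply, smul_eq_mul]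
    rw [show α a = 2 from S.root_coroot_two α hα]; ring
  set R' := S.R.filter (fun β => β ≠ α ∧ β ≠ -α) with hR'
  have hmemR' : ∀ β, β ∈ R' ↔ (β ∈ S.R ∧ β ≠ α ∧ β ≠ -α) := by
    intro β; simp [hR']
  have hnegR' : ∀ β ∈ R', -β ∈ R' := by
    intro β hβ
    obtain ⟨h1, h2, h3⟩ := (hmemR' β).mp hβ
    rw [hmemR']
    refine ⟨S.neg_mem h1, fun h => h3 (by rw [← neg_neg β, h]), fun h => h2 (by
      have := congrArg Neg.neg h
      rwa [neg_neg, neg_neg] at this)⟩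
  have hgR' : ∀ β ∈ R', g β ∈ R' := by
    intro β hβ
    obtain ⟨h1, h2, h3⟩ := (hmemR' β).mp hβ
    rw [hmemR']
    refine ⟨S.refl_root_mem α hα β h1, ?_, ?_⟩
    · intro h
      apply h3
      rw [← hgg β, h, hgα]
    · intro h
      apply h2
      have := congrArg g h
      rw [hgg β, hgneg, hgα, neg_neg] at this
      exact this
  have hgfix : ∀ β ∈ R', g β ≠ β ∧ g β ≠ -β := by
    intro β hβ
    obtain ⟨h1, h2, h3⟩ := (hmemR' β).mp hβ
    constructor
    · intro h
      have h5 : β a • α = 0 := by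
        apply sub_eq_self.mp
        exact h
      rcases smul_eq_zero.mp h5 with h6 | h6
      · exact hcon β h1 h2 h3 h6
      · exact S.ne_zero α hα h6
    · intro h
      have h5 : β = (β a / 2) • α := by
        apply LinearMap.ext; intro y
        have := congrFun (congrArg (fun (f : Module.Dual ℝ V) => (f : V → ℝ)) h) y
        simp only [hg, LinearMap.sub_apply, LinearMap.smul_apply, LinearMap.neg_apply,
          smul_eq_mul] at this ⊢
        field_simp
        linarith
      rcases S.reduced α hα β h1 _ h5 with h6 | h6
      · exact h2 h6
      · exact h3 h6
  -- count R' = 10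
  have hcardR' : R'.card = 10 := by
    have hEq : R' = S.R \ {α, -α} := by
      apply Finset.ext
      intro β
      simp only [Finset.mem_sdiff, Finset.mem_insert, Finset.mem_singleton, hmemR']
      tauto
    have hsub : ({α, -α} : Finset (Module.Dual ℝ V)) ⊆ S.R := by
      intro β hβ
      rcases Finset.mem_insert.mp hβ with rfl | hβ
      · exact hα
      · rw [Finset.mem_singleton.mp hβ]; exact S.neg_mem hα
    have hc2 : ({α, -α} : Finset (Module.Dual ℝ V)).card = 2 := by
      rw [Finset.card_insert_of_notMem (by simp [S.ne_neg_self hα]), Finset.card_singleton]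
    rw [hEq, Finset.card_sdiff_of_subset hsub, hc2, hcard]
  -- lines
  set lines := R'.image (fun β => ({β, -β} : Finset (Module.Dual ℝ V))) with hlines
  have hfiber : ∀ L ∈ lines, (R'.filter (fun β => ({β, -β} : Finset (Module.Dual ℝ V)) = L)).card = 2 := by
    intro L hL
    obtain ⟨β₀, hβ₀, rfl⟩ := Finset.mem_image.mp hL
    have hne : β₀ ≠ -β₀ := S.ne_neg_self ((hmemR' β₀).mp hβ₀).1
    have : R'.filter (fun β => ({β, -β} : Finset (Module.Dual ℝ V)) = {β₀, -β₀}) = {β₀, -β₀} := by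
      apply Finset.ext
      intro β
      simp only [Finset.mem_filter, Finset.mem_insert, Finset.mem_singleton]
      constructor
      · rintro ⟨hβ, hpair⟩
        have : β ∈ ({β₀, -β₀} : Finset (Module.Dual ℝ V)) := by
          rw [← hpair]; simp
        simpa using this
      · rintro (rfl | rfl)
        · exact ⟨hβ₀, rfl⟩
        · refine ⟨hnegR' β₀ hβ₀, ?_⟩
          rw [neg_neg, Finset.pair_comm]
    rw [this]
    rw [Finset.card_insert_of_notMem (by simp [hne]), Finset.card_singleton]
  have hcountl : lines.card = 5 := by
    have := Finset.card_eq_sum_card_image (fun β => ({β, -β} : Finset (Module.Dual ℝ V))) R'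
    rw [hcardR'] at this
    rw [Finset.sum_congr rfl hfiber] at this
    simp only [Finset.sum_const, smul_eq_mul] at this
    omega
  -- the involution on lines
  have : Even 5 := by
    apply even_card_of_fpf 5 lines (fun L => L.image g) hcountl
    · intro L hL
      obtain ⟨β, hβ, rfl⟩ := Finset.mem_image.mp hL
      have himg : ({β, -β} : Finset (Module.Dual ℝ V)).image g = {g β, -(g β)} := by
        rw [Finset.image_insert, Finset.image_singleton, hgneg]
      rw [himg, hlines]
      exact Finset.mem_image.mpr ⟨g β, hgR' β hβ, rfl⟩
    · intro L hL
      obtain ⟨β, hβ, rfl⟩ := Finset.mem_image.mp hL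
      rw [Finset.image_image]
      have : ({β, -β} : Finset (Module.Dual ℝ V)).image (g ∘ g) = {g (g β), g (g (-β))} := by
        rw [Finset.image_insert, Finset.image_singleton]; rfl
      rw [this, hgg, hgg]
    · intro L hL
      obtain ⟨β, hβ, rfl⟩ := Finset.mem_image.mp hL
      have himg : ({β, -β} : Finset (Module.Dual ℝ V)).image g = {g β, -(g β)} := by
        rw [Finset.image_insert, Finset.image_singleton, hgneg]
      rw [himg]
      intro h
      have : g β ∈ ({β, -β} : Finset (Module.Dual ℝ V)) := by
        rw [← h]; simp
      simp only [Finset.mem_insert, Finset.mem_singleton] at this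
      rcases this with h1 | h1
      · exact (hgfix β hβ).1 h1
      · exact (hgfix β hβ).2 h1
  exact (by decide : ¬ Even 5) this

/-- Every root has an "orthogonal partner" whose reflection is minus the original one. -/
lemma partner [FiniteDimensional ℝ V] (hdim : finrank ℝ V = 2) (hcard : S.R.card = 12)
    {α : Module.Dual ℝ V} (hα : α ∈ S.R) :
    ∃ β, ∃ hβ : β ∈ S.R, β ≠ α ∧ β ≠ -α ∧ β (S.coroot α) = 0 ∧ α (S.coroot β) = 0 ∧
      (∀ x, S.sE hα (S.sE hβ x) = -x) ∧ (∀ x, S.sE hβ x = -(S.sE hα x)) := by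
  obtain ⟨β, hβ, h1, h2, h3⟩ := S.exists_orth hdim hcard hα
  obtain ⟨m, hm⟩ := S.crystallographic β hβ α hα
  have hn : β (S.coroot α) = ((0 : ℤ) : ℝ) := by rw [h3]; norm_num
  rcases S.rot hdim hcard hα hβ h1 h2 hn hm with ⟨hge, _⟩ | ⟨_, hm0, hpt⟩
  · omega
  · have hm' : α (S.coroot β) = 0 := by rw [hm, hm0]; norm_num
    refine ⟨β, hβ, h1, h2, h3, hm', hpt, ?_⟩
    intro x
    have := hpt x
    have h4 : S.sE hα (S.sE hα (S.sE hβ x)) = S.sE hα (-x) := by rw [this]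
    rw [S.sE_sE] at h4
    rw [h4, map_neg]

end RedCrystRootSystem
namespace RedCrystRootSystem

variable {V : Type*} [AddCommGroup V] [Module ℝ V] (S : RedCrystRootSystem V)

/-- helper: a root outside a list of 8 prescribed roots exists -/
lemma exists_outside (hcard : S.R.card = 12) (l : Finset (Module.Dual ℝ V))
    (hl : l.card ≤ 8) : ∃ γ ∈ S.R, γ ∉ l := by
  by_contra h
  push_neg at h
  have := Finset.card_le_card h
  omega

/-- If the two reflections are pointwise negatives, roots are on partner lines;
    helper giving non-partnership from root distinctions. -/
lemma not_partner_line {α γ α' : Module.Dual ℝ V} (hα : α ∈ S.R) (hγ : γ ∈ S.R)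
    (hα' : α' ∈ S.R)
    (hpt : ∀ x, S.sE hα' x = -(S.sE hα x))
    (h1 : γ ≠ α') (h2 : γ ≠ -α') :
    ¬ (∀ x, S.sE hγ x = -(S.sE hα x)) := by
  intro h
  have heq : ∀ x, x - γ x • S.coroot γ = x - α' x • S.coroot α' := by
    intro x
    have := (h x).trans (hpt x).symm
    simpa using this
  rcases S.root_eq_of_refl_eq hγ hα' heq with h3 | h3
  · exact h1 h3.symm
  · apply h2
    rw [h3, neg_neg]

lemma cross_vals13 [FiniteDimensional ℝ V] (hdim : finrank ℝ V = 2) (hcard : S.R.card = 12)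
    {α γ : Module.Dual ℝ V} (hα : α ∈ S.R) (hγ : γ ∈ S.R) (h1 : γ ≠ α) (h2 : γ ≠ -α)
    (h3 : ¬ ∀ x, S.sE hγ x = -(S.sE hα x))
    {n m : ℤ} (hn : γ (S.coroot α) = (n : ℝ)) (hm : α (S.coroot γ) = (m : ℝ)) :
    1 ≤ n * m ∧ n * m ≤ 3 := by
  rcases S.rot hdim hcard hα hγ h1 h2 hn hm with ⟨hge, hle⟩ | ⟨hn0, hm0, hpt⟩
  · omega
  · exfalso
    apply h3
    intro x
    have := hpt x
    have h4 : S.sE hα (S.sE hα (S.sE hγ x)) = S.sE hα (-x) := by rw [this]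
    rw [S.sE_sE] at h4
    rw [h4, map_neg]

end RedCrystRootSystem
namespace RedCrystRootSystem

variable {V : Type*} [AddCommGroup V] [Module ℝ V] (S : RedCrystRootSystem V)

set_option maxHeartbeats 1000000 in
/-- No pair of roots has pairing product 2: no 45-degree angles in a 12-root system. -/
lemma no_c2 [FiniteDimensional ℝ V] (hdim : finrank ℝ V = 2) (hcard : S.R.card = 12)
    {α β : Module.Dual ℝ V} (hα : α ∈ S.R) (hβ : β ∈ S.R)
    (h1 : β ≠ α) (h2 : β ≠ -α) {n m : ℤ}
    (hn : β (S.coroot α) = (n : ℝ)) (hm : α (S.coroot β) = (m : ℝ)) :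
    n * m ≠ 2 := by
  classical
  intro hnm
  set a := S.coroot α with ha_def
  set b := S.coroot β with hb_def
  obtain ⟨α', hα', hA1, hA2, _, _, _, hptA⟩ := S.partner hdim hcard hα
  obtain ⟨β', hβ', hB1, hB2, _, _, _, hptB⟩ := S.partner hdim hcard hβ
  -- pick a root outside the four lines
  set l : Finset (Module.Dual ℝ V) := {α, -α, α', -α', β, -β, β', -β'} with hl
  have hlcard : l.card ≤ 8 := by
    rw [hl]
    refine Finset.card_insert_le _ _ |>.trans (Nat.succ_le_succ ?_)
    refine Finset.card_insert_le _ _ |>.trans (Nat.succ_le_succ ?_)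
    refine Finset.card_insert_le _ _ |>.trans (Nat.succ_le_succ ?_)
    refine Finset.card_insert_le _ _ |>.trans (Nat.succ_le_succ ?_)
    refine Finset.card_insert_le _ _ |>.trans (Nat.succ_le_succ ?_)
    refine Finset.card_insert_le _ _ |>.trans (Nat.succ_le_succ ?_)
    refine Finset.card_insert_le _ _ |>.trans (Nat.succ_le_succ ?_)
    exact (Finset.card_singleton _).le
  obtain ⟨γ, hγ, hγl⟩ := S.exists_outside hcard l hlcard
  have hγmem : ∀ z, z ∈ l → γ ≠ z := by
    intro z hz hzz
    exact hγl (hzz ▸ hz)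
  have hγα : γ ≠ α := hγmem α (by rw [hl]; simp)
  have hγnα : γ ≠ -α := hγmem (-α) (by rw [hl]; simp)
  have hγα' : γ ≠ α' := hγmem α' (by rw [hl]; simp)
  have hγnα' : γ ≠ -α' := hγmem (-α') (by rw [hl]; simp)
  have hγβ : γ ≠ β := hγmem β (by rw [hl]; simp)
  have hγnβ : γ ≠ -β := hγmem (-β) (by rw [hl]; simp)
  have hγβ' : γ ≠ β' := hγmem β' (by rw [hl]; simp)
  have hγnβ' : γ ≠ -β' := hγmem (-β') (by rw [hl]; simp)
  -- pairings with γ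
  obtain ⟨g1, hg1⟩ := S.crystallographic α hα γ hγ
  obtain ⟨g2, hg2⟩ := S.crystallographic β hβ γ hγ
  obtain ⟨u, hu⟩ := S.crystallographic γ hγ α hα
  obtain ⟨v, hv⟩ := S.crystallographic γ hγ β hβ
  have hc1 := S.cross_vals13 hdim hcard hα hγ hγα hγnα
    (S.not_partner_line hα hγ hα' hptA hγα' hγnα') hg1 hu
  have hc2 := S.cross_vals13 hdim hcard hβ hγ hγβ hγnβ
    (S.not_partner_line hβ hγ hβ' hptB hγβ' hγnβ') hg2 hv
  -- coordinates of coroot γ in the basis (a, b)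
  have hli : LinearIndependent ℝ ![a, b] := S.coroot_indep hdim hcard hα hβ h1 h2
  have hB : Fintype.card (Fin 2) = finrank ℝ V := by simp [hdim]
  have hNontriv : Nontrivial V := by
    rcases S.exists_apply_ne_zero hα with ⟨x, hx⟩
    exact ⟨x, 0, fun h => hx (by rw [h, map_zero])⟩
  let B : Basis (Fin 2) ℝ V := basisOfLinearIndependentOfCardEqFinrank hli hB
  have hB0 : B 0 = a := by
    show (basisOfLinearIndependentOfCardEqFinrank hli hB) 0 = a
    rw [coe_basisOfLinearIndependentOfCardEqFinrank]; rfl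
  have hB1 : B 1 = b := by
    show (basisOfLinearIndependentOfCardEqFinrank hli hB) 1 = b
    rw [coe_basisOfLinearIndependentOfCardEqFinrank]; rfl
  set cg := S.coroot γ with hcg
  obtain ⟨p, q, hpq⟩ : ∃ p q : ℝ, cg = p • a + q • b := by
    refine ⟨B.repr cg 0, B.repr cg 1, ?_⟩
    have := B.sum_repr cg
    rw [Fin.sum_univ_two, hB0, hB1] at this
    exact this.symm
  have e1 : (u : ℝ) = 2*p + (m:ℝ)*q := by
    rw [← hu, hpq, map_add, map_smul, map_smul]
    rw [show α a = 2 from S.root_coroot_two α hα, hm, smul_eq_mul, smul_eq_mul]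
    ring
  have e2 : (v : ℝ) = (n:ℝ)*p + 2*q := by
    rw [← hv, hpq, map_add, map_smul, map_smul]
    rw [show β b = 2 from S.root_coroot_two β hβ, hn, smul_eq_mul, smul_eq_mul]
    ring
  have e3 : (2 : ℝ) = p*(g1:ℝ) + q*(g2:ℝ) := by
    rw [← S.root_coroot_two γ hγ, ← hcg, hpq, map_add, map_smul, map_smul, hg1, hg2,
      smul_eq_mul, smul_eq_mul]
  have hnmR : (n:ℝ) * (m:ℝ) = 2 := by exact_mod_cast hnm
  have key : (4:ℝ) = 2*((g1:ℝ)*u) + 2*((g2:ℝ)*v) - ((m:ℝ)*((g1:ℝ)*v) + (n:ℝ)*((g2:ℝ)*u)) := by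
    linear_combination ((n:ℝ)*g2 - 2*(g1:ℝ)) * e1 + ((m:ℝ)*g1 - 2*(g2:ℝ)) * e2
      + 2 * e3 + (p*(g1:ℝ) + q*(g2:ℝ)) * hnmR
  have keyZ : (4:ℤ) = 2*(g1*u) + 2*(g2*v) - (m*(g1*v) + n*(g2*u)) := by exact_mod_cast key
  set c1 : ℤ := g1*u with hc1_def
  set c2 : ℤ := g2*v with hc2_def
  set w1 : ℤ := m*(g1*v) with hw1
  set w2 : ℤ := n*(g2*u) with hw2
  have hsum : w1 + w2 = 2*c1 + 2*c2 - 4 := by omega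
  have hprod : w1 * w2 = 2*(c1*c2) := by
    have e : m*(g1*v) * (n*(g2*u)) = (n*m) * ((g1*u)*(g2*v)) := by ring
    rw [hw1, hw2, hc1_def, hc2_def, e, hnm]
  obtain ⟨hc1l, hc1u⟩ := hc1
  obtain ⟨hc2l, hc2u⟩ := hc2
  have hsq := mul_self_nonneg (w1 - w2)
  have hA : (0:ℤ) ≤ (c1-1)*(3-c1) := mul_nonneg (by omega) (by omega)
  have hB : (0:ℤ) ≤ (c2-1)*(3-c2) := mul_nonneg (by omega) (by omega)
  have hs2 : (w1+w2)*(w1+w2) = (2*c1+2*c2-4)*(2*c1+2*c2-4) := by rw [hsum]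
  nlinarith [hsq, hprod, hs2, hA, hB]

end RedCrystRootSystem
namespace RedCrystRootSystem

variable {V : Type*} [AddCommGroup V] [Module ℝ V] (S : RedCrystRootSystem V)

lemma coroot_mem_lattice {γ : Module.Dual ℝ V} (hγ : γ ∈ S.R) :
    S.coroot γ ∈ S.corootLattice :=
  AddSubgroup.subset_closure ⟨γ, hγ, rfl⟩

lemma lattice_int {γ : Module.Dual ℝ V} (hγ : γ ∈ S.R) {x : V}
    (hx : x ∈ S.corootLattice) : ∃ z : ℤ, γ x = (z : ℝ) := by
  induction hx using AddSubgroup.closure_induction with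
  | mem y hy =>
    obtain ⟨β, hβ, rfl⟩ := hy
    exact S.crystallographic β hβ γ hγ
  | zero => exact ⟨0, by simp⟩
  | add a b _ _ iha ihb =>
    obtain ⟨z1, h1⟩ := iha; obtain ⟨z2, h2⟩ := ihb
    exact ⟨z1 + z2, by rw [map_add, h1, h2]; push_cast; ring⟩
  | neg a _ iha =>
    obtain ⟨z, hz⟩ := iha
    exact ⟨-z, by rw [map_neg, hz]; push_cast; ring⟩

lemma lattice_refl_pres {γ : Module.Dual ℝ V} (hγ : γ ∈ S.R) {x : V}
    (hx : x ∈ S.corootLattice) : S.sE hγ x ∈ S.corootLattice := by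
  induction hx using AddSubgroup.closure_induction with
  | mem y hy =>
    obtain ⟨β, hβ, rfl⟩ := hy
    obtain ⟨δ, hδ, heq⟩ := S.refl_coroot_mem γ hγ β hβ
    have : S.sE hγ (S.coroot β) = S.coroot δ := by
      rw [sE_apply]
      rw [← heq]
    rw [this]
    exact S.coroot_mem_lattice hδ
  | zero => rw [map_zero]; exact zero_mem _
  | add a b ha hb iha ihb => rw [map_add]; exact add_mem iha ihb
  | neg a ha iha =>
    have hmn : S.sE hγ (-a) = -(S.sE hγ a) := by
      simp only [sE_apply, map_neg]
    rw [hmn]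
    exact S.corootLattice.neg_mem iha

lemma fixes_mk {γ : Module.Dual ℝ V} (hγ : γ ∈ S.R) {x : V}
    (h : γ x • S.coroot γ ∈ S.corootLattice) :
    FixesInTorus S.corootLattice (S.sE hγ) (QuotientAddGroup.mk x) := by
  refine ⟨QuotientAddGroup.map S.corootLattice S.corootLattice
    ((S.sE hγ).toLinearMap.toAddMonoidHom) (fun y hy => ?_), fun y => ?_, ?_⟩
  · exact S.lattice_refl_pres hγ hy
  · rfl
  · show QuotientAddGroup.mk (S.sE hγ x) = QuotientAddGroup.mk x
    rw [QuotientAddGroup.eq]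
    have : -(S.sE hγ x) + x = γ x • S.coroot γ := by
      rw [sE_apply]; abel
    rw [this]
    exact h

lemma fixes_elim {γ : Module.Dual ℝ V} {e : V ≃ₗ[ℝ] V} {x : V} (c : V)
    (he : ∀ y, e y = y - γ y • c)
    (hF : FixesInTorus S.corootLattice e (QuotientAddGroup.mk x)) :
    γ x • c ∈ S.corootLattice := by
  obtain ⟨f, hf, hfix⟩ := hF
  have h1 : QuotientAddGroup.mk (e x) = (QuotientAddGroup.mk x : V ⧸ S.corootLattice) := by
    rw [← hf x]; exact hfix
  rw [QuotientAddGroup.eq] at h1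
  have : -(e x) + x = γ x • c := by rw [he x]; abel
  rwa [this] at h1

/-- Existence of a pair of roots with pairing product 3. -/
lemma exists_c3 [FiniteDimensional ℝ V] (hdim : finrank ℝ V = 2) (hcard : S.R.card = 12) :
    ∃ (α δ : Module.Dual ℝ V) (hα : α ∈ S.R) (hδ : δ ∈ S.R) (n m : ℤ),
      δ (S.coroot α) = (n : ℝ) ∧ α (S.coroot δ) = (m : ℝ) ∧ n * m = 3 ∧ δ ≠ α ∧ δ ≠ -α := by
  classical
  have hne : S.R.Nonempty := Finset.card_pos.mp (by omega)
  obtain ⟨α, hα⟩ := hne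
  obtain ⟨α', hα', hA1, hA2, _, _, _, hptA⟩ := S.partner hdim hcard hα
  set l : Finset (Module.Dual ℝ V) := {α, -α, α', -α'} with hl
  have hlcard : l.card ≤ 8 := by
    rw [hl]
    refine Finset.card_insert_le _ _ |>.trans (Nat.succ_le_succ ?_)
    refine Finset.card_insert_le _ _ |>.trans (Nat.succ_le_succ ?_)
    refine Finset.card_insert_le _ _ |>.trans (Nat.succ_le_succ ?_)
    exact (Finset.card_singleton _).le.trans (by omega)
  obtain ⟨δ', hδ', hδl⟩ := S.exists_outside hcard l hlcard
  have hδα : δ' ≠ α := fun h => hδl (by rw [hl, h]; simp)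
  have hδnα : δ' ≠ -α := fun h => hδl (by rw [hl, h]; simp)
  have hδα' : δ' ≠ α' := fun h => hδl (by rw [hl, h]; simp)
  have hδnα' : δ' ≠ -α' := fun h => hδl (by rw [hl, h]; simp)
  obtain ⟨n, hn⟩ := S.crystallographic α hα δ' hδ'
  obtain ⟨m, hm⟩ := S.crystallographic δ' hδ' α hα
  have h13 := S.cross_vals13 hdim hcard hα hδ' hδα hδnα
    (S.not_partner_line hα hδ' hα' hptA hδα' hδnα') hn hm
  have hno2 := S.no_c2 hdim hcard hα hδ' hδα hδnα hn hm
  rcases (by omega : n * m = 1 ∨ n * m = 3) with h1 | h3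
  · -- pass to the partner of δ'
    obtain ⟨δ'', hδ'', hD1, hD2, _, _, _, hptD⟩ := S.partner hdim hcard hδ'
    obtain ⟨n2, hn2⟩ := S.crystallographic α hα δ'' hδ''
    obtain ⟨m2, hm2⟩ := S.crystallographic δ'' hδ'' α hα
    -- the key identity : n2 * m2 = 4 - n*m = 3
    have hkey : ∀ x, δ'' x • S.coroot δ'' = (2:ℝ) • x - δ' x • S.coroot δ' := by
      intro x
      have := hptD x
      simp only [sE_apply] at this
      have h4 : x - δ'' x • S.coroot δ'' = -x + δ' x • S.coroot δ' := by
        rw [this]; abel_nf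
      have := congrArg (fun z => x - z) h4
      simp only [sub_sub_cancel] at this
      rw [this]
      module
    have hval : (n2 : ℝ) * m2 = 3 := by
      have h5 := congrArg α (hkey (S.coroot α))
      rw [map_sub, map_smul, map_smul, map_smul, S.root_coroot_two α hα, hn2, hm, hm2] at h5
      have h6 : (n : ℝ) * m = 1 := by exact_mod_cast h1
      simp only [smul_eq_mul] at h5
      rw [hn] at h5
      nlinarith [h5, h6]
    have hval' : n2 * m2 = 3 := by exact_mod_cast hval
    have hd2α : δ'' ≠ α := by
      intro h
      rw [h, S.root_coroot_two α hα] at hn2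
      have h7 : n2 = 2 := by exact_mod_cast hn2.symm
      rw [h7] at hval'
      omega
    have hd2nα : δ'' ≠ -α := by
      intro h
      rw [h] at hn2
      simp only [LinearMap.neg_apply, S.root_coroot_two α hα] at hn2
      have h7 : n2 = -2 := by
        have h8 : (-2 : ℝ) = (n2 : ℝ) := hn2
        exact_mod_cast h8.symm
      rw [h7] at hval'
      omega
    exact ⟨α, δ'', hα, hδ'', n2, m2, hn2, hm2, hval', hd2α, hd2nα⟩
  · exact ⟨α, δ', hα, hδ', n, m, hn, hm, h3, hδα, hδnα⟩

end RedCrystRootSystem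
namespace RedCrystRootSystem

variable {V : Type*} [AddCommGroup V] [Module ℝ V] (S : RedCrystRootSystem V)

/-- Pairings between roots on distinct, non-orthogonal line pairs are odd. -/
lemma cross_odd [FiniteDimensional ℝ V] (hdim : finrank ℝ V = 2) (hcard : S.R.card = 12)
    {γ δ γ' : Module.Dual ℝ V} (hγ : γ ∈ S.R) (hδ : δ ∈ S.R) (hγ' : γ' ∈ S.R)
    (hpt : ∀ x, S.sE hγ' x = -(S.sE hγ x))
    (h1 : δ ≠ γ) (h2 : δ ≠ -γ) (h3 : δ ≠ γ') (h4 : δ ≠ -γ')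
    {n m : ℤ} (hn : δ (S.coroot γ) = (n : ℝ)) (hm : γ (S.coroot δ) = (m : ℝ)) :
    Odd n ∧ Odd m := by
  have h13 := S.cross_vals13 hdim hcard hγ hδ h1 h2
    (S.not_partner_line hγ hδ hγ' hpt h3 h4) hn hm
  have hno2 := S.no_c2 hdim hcard hγ hδ h1 h2 hn hm
  have : n * m = 1 ∨ n * m = 3 := by omega
  have hodd : Odd (n * m) := by rcases this with h | h <;> rw [h] <;> decide
  exact ⟨(Int.odd_mul.mp hodd).1, (Int.odd_mul.mp hodd).2⟩

/-- `[coroot γ / 2]` is a non-zero 2-torsion point of the torus. -/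
lemma half_coroot_ne_zero [FiniteDimensional ℝ V] (hdim : finrank ℝ V = 2)
    (hcard : S.R.card = 12) {γ : Module.Dual ℝ V} (hγ : γ ∈ S.R) :
    (QuotientAddGroup.mk ((2⁻¹ : ℝ) • S.coroot γ) : V ⧸ S.corootLattice) ≠ 0 := by
  classical
  intro h0
  have hmem : (2⁻¹ : ℝ) • S.coroot γ ∈ S.corootLattice := by
    have := (QuotientAddGroup.eq_zero_iff _).mp h0
    exact this
  obtain ⟨γ', hγ', hc1, hc2, _, _, _, hpt⟩ := S.partner hdim hcard hγ
  set l : Finset (Module.Dual ℝ V) := {γ, -γ, γ', -γ'} with hl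
  have hlcard : l.card ≤ 8 := by
    rw [hl]
    refine Finset.card_insert_le _ _ |>.trans (Nat.succ_le_succ ?_)
    refine Finset.card_insert_le _ _ |>.trans (Nat.succ_le_succ ?_)
    refine Finset.card_insert_le _ _ |>.trans (Nat.succ_le_succ ?_)
    exact (Finset.card_singleton _).le.trans (by omega)
  obtain ⟨ρ, hρ, hρl⟩ := S.exists_outside hcard l hlcard
  have e1 : ρ ≠ γ := fun h => hρl (by rw [hl, h]; simp)
  have e2 : ρ ≠ -γ := fun h => hρl (by rw [hl, h]; simp)
  have e3 : ρ ≠ γ' := fun h => hρl (by rw [hl, h]; simp)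
  have e4 : ρ ≠ -γ' := fun h => hρl (by rw [hl, h]; simp)
  obtain ⟨n, hn⟩ := S.crystallographic γ hγ ρ hρ
  obtain ⟨m, hm⟩ := S.crystallographic ρ hρ γ hγ
  obtain ⟨hoddn, hoddm⟩ := S.cross_odd hdim hcard hγ hρ hγ' hpt e1 e2 e3 e4 hn hm
  obtain ⟨z, hz⟩ := S.lattice_int hρ hmem
  rw [map_smul, hn, smul_eq_mul] at hz
  have : (2 : ℝ) * z = n := by
    rw [← hz]; field_simp
  have hcast : 2 * z = n := by exact_mod_cast this
  obtain ⟨k, hk⟩ := hoddn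
  omega

/-- Cross-line roots give different 2-torsion points. -/
lemma half_coroot_ne [FiniteDimensional ℝ V] (hdim : finrank ℝ V = 2)
    (hcard : S.R.card = 12) {γ δ γ' : Module.Dual ℝ V}
    (hγ : γ ∈ S.R) (hδ : δ ∈ S.R) (hγ' : γ' ∈ S.R)
    (hpt : ∀ x, S.sE hγ' x = -(S.sE hγ x))
    (h1 : δ ≠ γ) (h2 : δ ≠ -γ) (h3 : δ ≠ γ') (h4 : δ ≠ -γ') :
    (QuotientAddGroup.mk ((2⁻¹ : ℝ) • S.coroot γ) : V ⧸ S.corootLattice) ≠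
      QuotientAddGroup.mk ((2⁻¹ : ℝ) • S.coroot δ) := by
  intro heq
  rw [QuotientAddGroup.eq] at heq
  obtain ⟨n, hn⟩ := S.crystallographic γ hγ δ hδ
  obtain ⟨m, hm⟩ := S.crystallographic δ hδ γ hγ
  obtain ⟨hoddn, hoddm⟩ := S.cross_odd hdim hcard hγ hδ hγ' hpt h1 h2 h3 h4 hn hm
  obtain ⟨z, hz⟩ := S.lattice_int hγ heq
  rw [map_add, map_neg, map_smul, map_smul, S.root_coroot_two γ hγ, hm, smul_eq_mul,
    smul_eq_mul] at hz
  have : (2:ℝ) * z = m - 2 := by rw [← hz]; field_simp; ring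
  have hcast : 2 * z = m - 2 := by exact_mod_cast this
  obtain ⟨k, hk⟩ := hoddm
  omega

/-- A cross-line reflection does not fix `[coroot γ / 2]`. -/
lemma not_fix_cross [FiniteDimensional ℝ V] (hdim : finrank ℝ V = 2)
    (hcard : S.R.card = 12) {γ δ γ' : Module.Dual ℝ V}
    (hγ : γ ∈ S.R) (hδ : δ ∈ S.R) (hγ' : γ' ∈ S.R)
    (hpt : ∀ x, S.sE hγ' x = -(S.sE hγ x))
    (h1 : δ ≠ γ) (h2 : δ ≠ -γ) (h3 : δ ≠ γ') (h4 : δ ≠ -γ') :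
    ¬ FixesInTorus S.corootLattice (S.sE hδ)
      (QuotientAddGroup.mk ((2⁻¹ : ℝ) • S.coroot γ)) := by
  intro hF
  have hmem := S.fixes_elim (S.coroot δ) (fun y => rfl) hF
  obtain ⟨n, hn⟩ := S.crystallographic γ hγ δ hδ
  obtain ⟨m, hm⟩ := S.crystallographic δ hδ γ hγ
  obtain ⟨hoddn, hoddm⟩ := S.cross_odd hdim hcard hγ hδ hγ' hpt h1 h2 h3 h4 hn hm
  rw [map_smul, hn, smul_eq_mul] at hmem
  obtain ⟨z, hz⟩ := S.lattice_int hγ hmem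
  rw [map_smul, hm, smul_eq_mul] at hz
  have : (2:ℝ) * z = n * m := by rw [← hz]; push_cast; field_simp
  have hcast : 2 * z = n * m := by exact_mod_cast this
  obtain ⟨k, hk⟩ := hoddn.mul hoddm
  omega

lemma sE_neg_root [FiniteDimensional ℝ V] (hdim : finrank ℝ V = 2)
    (hcard : S.R.card = 12) {γ : Module.Dual ℝ V} (hγ : γ ∈ S.R) :
    S.sE (S.neg_mem hγ) = S.sE hγ := by
  apply LinearEquiv.ext
  intro x
  simp only [sE_apply, LinearMap.neg_apply, S.coroot_neg hdim hcard hγ]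
  module

/-- The full set of reflections fixing `[coroot γ / 2]` is the pair `{s_γ, s_γ'}`. -/
lemma fix_set_eq [FiniteDimensional ℝ V] (hdim : finrank ℝ V = 2)
    (hcard : S.R.card = 12) {γ γ' : Module.Dual ℝ V}
    (hγ : γ ∈ S.R) (hγ' : γ' ∈ S.R)
    (ho1 : γ' (S.coroot γ) = 0) (ho2 : γ (S.coroot γ') = 0)
    (hpt : ∀ x, S.sE hγ' x = -(S.sE hγ x)) :
    {e : V ≃ₗ[ℝ] V | S.IsReflection e ∧
        FixesInTorus S.corootLattice e (QuotientAddGroup.mk ((2⁻¹ : ℝ) • S.coroot γ))} =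
      {S.sE hγ, S.sE hγ'} := by
  apply Set.ext
  intro e
  constructor
  · rintro ⟨⟨ρ, hρ, hform⟩, hfix⟩
    have heρ : e = S.sE hρ := by
      apply LinearEquiv.ext; intro x; rw [hform x]; rfl
    by_cases c1 : ρ = γ
    · left; rw [heρ]; subst c1; rfl
    by_cases c2 : ρ = -γ
    · left; rw [heρ]; subst c2
      exact S.sE_neg_root hdim hcard hγ
    by_cases c3 : ρ = γ'
    · right; rw [heρ]; subst c3; rfl
    by_cases c4 : ρ = -γ'
    · right; rw [heρ]; subst c4
      exact S.sE_neg_root hdim hcard hγ'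
    exfalso
    refine S.not_fix_cross hdim hcard hγ hρ hγ' hpt c1 c2 c3 c4 ?_
    rw [← heρ]
    exact hfix
  · intro he
    rcases he with rfl | rfl
    · refine ⟨S.isReflection_sE hγ, S.fixes_mk hγ ?_⟩
      have : γ ((2⁻¹ : ℝ) • S.coroot γ) • S.coroot γ = S.coroot γ := by
        rw [map_smul, S.root_coroot_two γ hγ]
        norm_num
      rw [this]
      exact S.coroot_mem_lattice hγ
    · refine ⟨S.isReflection_sE hγ', S.fixes_mk hγ' ?_⟩
      have : γ' ((2⁻¹ : ℝ) • S.coroot γ) • S.coroot γ' = 0 := by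
        rw [map_smul, ho1]
        simp
      rw [this]
      exact zero_mem _
  
end RedCrystRootSystem
namespace RedCrystRootSystem

variable {V : Type*} [AddCommGroup V] [Module ℝ V] (S : RedCrystRootSystem V)

lemma lattice_char [FiniteDimensional ℝ V] (hdim : finrank ℝ V = 2) (hcard : S.R.card = 12)
    {A D : Module.Dual ℝ V} (hA : A ∈ S.R) (hD : D ∈ S.R) {n m : ℤ}
    (hn : D (S.coroot A) = (n : ℝ)) (hm : A (S.coroot D) = (m : ℝ)) (hnm3 : n * m = 3)
    (h1 : D ≠ A) (h2 : D ≠ -A) {x : V} (hx : x ∈ S.corootLattice) :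
    ∃ k l : ℤ, x = (k : ℝ) • S.coroot A + (l : ℝ) • S.coroot D := by
  classical
  have hli : LinearIndependent ℝ ![S.coroot A, S.coroot D] :=
    S.coroot_indep hdim hcard hA hD h1 h2
  have hB : Fintype.card (Fin 2) = finrank ℝ V := by simp [hdim]
  have hNontriv : Nontrivial V := by
    rcases S.exists_apply_ne_zero hA with ⟨y, hy⟩
    exact ⟨y, 0, fun h => hy (by rw [h, map_zero])⟩
  set B : Basis (Fin 2) ℝ V := basisOfLinearIndependentOfCardEqFinrank hli hB with hBdef
  have hB0 : B 0 = S.coroot A := by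
    rw [hBdef]
    show (basisOfLinearIndependentOfCardEqFinrank hli hB) 0 = _
    rw [coe_basisOfLinearIndependentOfCardEqFinrank]; rfl
  have hB1 : B 1 = S.coroot D := by
    rw [hBdef]
    show (basisOfLinearIndependentOfCardEqFinrank hli hB) 1 = _
    rw [coe_basisOfLinearIndependentOfCardEqFinrank]; rfl
  have hnmR : (n : ℝ) * (m : ℝ) = 3 := by exact_mod_cast hnm3
  induction hx using AddSubgroup.closure_induction with
  | mem y hy =>
    obtain ⟨β, hβ, rfl⟩ := hy
    obtain ⟨u, hu⟩ := S.crystallographic β hβ A hA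
    obtain ⟨v, hv⟩ := S.crystallographic β hβ D hD
    obtain ⟨p, q, hpq⟩ : ∃ p q : ℝ, S.coroot β = p • S.coroot A + q • S.coroot D := by
      refine ⟨B.repr (S.coroot β) 0, B.repr (S.coroot β) 1, ?_⟩
      have := B.sum_repr (S.coroot β)
      rw [Fin.sum_univ_two, hB0, hB1] at this
      exact this.symm
    have e1 : (u : ℝ) = 2*p + (m:ℝ)*q := by
      rw [← hu, hpq, map_add, map_smul, map_smul,
        show A (S.coroot A) = 2 from S.root_coroot_two A hA, hm, smul_eq_mul, smul_eq_mul]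
      ring
    have e2 : (v : ℝ) = (n:ℝ)*p + 2*q := by
      rw [← hv, hpq, map_add, map_smul, map_smul,
        show D (S.coroot D) = 2 from S.root_coroot_two D hD, hn, smul_eq_mul, smul_eq_mul]
      ring
    have hp : p = ((2*u - m*v : ℤ) : ℝ) := by
      push_cast
      linear_combination (-2 : ℝ)*e1 + (m:ℝ)*e2 + p*hnmR
    have hq : q = ((2*v - n*u : ℤ) : ℝ) := by
      push_cast
      linear_combination (n : ℝ)*e1 + (-2 : ℝ)*e2 + q*hnmR
    exact ⟨2*u - m*v, 2*v - n*u, by rw [hpq, hp, hq]⟩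
  | zero => exact ⟨0, 0, by norm_num⟩
  | add y z _ _ ihy ihz =>
    obtain ⟨k1, l1, h1'⟩ := ihy
    obtain ⟨k2, l2, h2'⟩ := ihz
    refine ⟨k1 + k2, l1 + l2, ?_⟩
    rw [h1', h2']
    push_cast
    module
  | neg y _ ihy =>
    obtain ⟨k, l, h'⟩ := ihy
    refine ⟨-k, -l, ?_⟩
    rw [h']
    push_cast
    module

end RedCrystRootSystem

/-- Let `(V, R, α ↦ α∨)` be a reduced crystallographic root system of
type `G₂` (i.e. `dim V = 2` and there are exactly 12 roots), with coroot lattice `Q∨`,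
Weyl group `W`, and torus `T = V ⧸ Q∨`.  Then: (i) `-id_V ∈ W`; (ii) the fixed-point set
`T^{-id} = { t : -t = t }` has exactly four elements; (iii) each non-zero `t ∈ T^{-id}`
is fixed by exactly two of the reflections `s_α` (counting `s_α = s_{-α}` once), and the
product of these two reflections is `-id_V`; (iv) the resulting two-element sets of
reflections attached to the three non-zero elements of `T^{-id}` are pairwise
distinct. -/
theorem statement5 {V : Type*} [AddCommGroup V] [Module ℝ V] [FiniteDimensional ℝ V]
    (S : RedCrystRootSystem V)
    (hdim : Module.finrank ℝ V = 2) (hcard : S.R.card = 12) :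
    -- (i) `-id ∈ W`
    ((LinearEquiv.neg ℝ : V ≃ₗ[ℝ] V) ∈ S.weylGroup) ∧
    -- (ii) `T^{-id}` has exactly four elements
    ({t : V ⧸ S.corootLattice | -t = t}.ncard = 4) ∧
    -- (iii) each non-zero `t ∈ T^{-id}` is fixed by exactly two reflections,
    -- whose product is `-id`
    (∀ t : V ⧸ S.corootLattice, -t = t → t ≠ 0 →
      {e : V ≃ₗ[ℝ] V | S.IsReflection e ∧ FixesInTorus S.corootLattice e t}.ncard = 2 ∧
      ∀ e₁ e₂ : V ≃ₗ[ℝ] V,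
        e₁ ∈ {e : V ≃ₗ[ℝ] V | S.IsReflection e ∧ FixesInTorus S.corootLattice e t} →
        e₂ ∈ {e : V ≃ₗ[ℝ] V | S.IsReflection e ∧ FixesInTorus S.corootLattice e t} →
        e₁ ≠ e₂ → e₁ * e₂ = (LinearEquiv.neg ℝ : V ≃ₗ[ℝ] V)) ∧
    -- (iv) different non-zero elements of `T^{-id}` have different pairs of reflections
    (∀ t t' : V ⧸ S.corootLattice, -t = t → -t' = t' → t ≠ 0 → t' ≠ 0 → t ≠ t' →
      {e : V ≃ₗ[ℝ] V | S.IsReflection e ∧ FixesInTorus S.corootLattice e t} ≠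
        {e : V ≃ₗ[ℝ] V | S.IsReflection e ∧ FixesInTorus S.corootLattice e t'}) := by
  
  classical
  obtain ⟨A, D, hA, hD, n, m, hn, hm, hnm3, hDA, hDnA⟩ := S.exists_c3 hdim hcard
  obtain ⟨A', hA', hA'1, hA'2, hoA1, hoA2, hptA2, hptA⟩ := S.partner hdim hcard hA
  obtain ⟨D', hD', hD'1, hD'2, hoD1, hoD2, hptD2, hptD⟩ := S.partner hdim hcard hD
  have hn0 : n ≠ 0 := by intro h; rw [h] at hnm3; omega
  have hm0 : m ≠ 0 := by intro h; rw [h] at hnm3; omega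
  have hDA' : D ≠ A' := by
    intro h; rw [h, hoA1] at hn; exact hn0 (by exact_mod_cast hn.symm)
  have hDnA' : D ≠ -A' := by
    intro h; rw [h] at hn
    simp only [LinearMap.neg_apply, hoA1, neg_zero] at hn
    exact hn0 (by exact_mod_cast hn.symm)
  -- (i)
  have hi : (LinearEquiv.neg ℝ : V ≃ₗ[ℝ] V) ∈ S.weylGroup := by
    have hprod : S.sE hA * S.sE hA' = (LinearEquiv.neg ℝ : V ≃ₗ[ℝ] V) := by
      apply LinearEquiv.ext
      intro x
      show S.sE hA (S.sE hA' x) = -x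
      exact hptA2 x
    rw [← hprod]
    exact mul_mem (S.sE_mem_weylGroup hA) (S.sE_mem_weylGroup hA')
  -- pick a third line pair
  set l8 : Finset (Module.Dual ℝ V) := {A, -A, A', -A', D, -D, D', -D'} with hl8
  have hl8card : l8.card ≤ 8 := by
    rw [hl8]
    refine Finset.card_insert_le _ _ |>.trans (Nat.succ_le_succ ?_)
    refine Finset.card_insert_le _ _ |>.trans (Nat.succ_le_succ ?_)
    refine Finset.card_insert_le _ _ |>.trans (Nat.succ_le_succ ?_)
    refine Finset.card_insert_le _ _ |>.trans (Nat.succ_le_succ ?_)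
    refine Finset.card_insert_le _ _ |>.trans (Nat.succ_le_succ ?_)
    refine Finset.card_insert_le _ _ |>.trans (Nat.succ_le_succ ?_)
    refine Finset.card_insert_le _ _ |>.trans (Nat.succ_le_succ ?_)
    exact (Finset.card_singleton _).le
  obtain ⟨E, hE, hEl⟩ := S.exists_outside hcard l8 hl8card
  have hEA : E ≠ A := fun h => hEl (by rw [hl8, h]; simp)
  have hEnA : E ≠ -A := fun h => hEl (by rw [hl8, h]; simp)
  have hEA' : E ≠ A' := fun h => hEl (by rw [hl8, h]; simp)
  have hEnA' : E ≠ -A' := fun h => hEl (by rw [hl8, h]; simp)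
  have hED : E ≠ D := fun h => hEl (by rw [hl8, h]; simp)
  have hEnD : E ≠ -D := fun h => hEl (by rw [hl8, h]; simp)
  have hED' : E ≠ D' := fun h => hEl (by rw [hl8, h]; simp)
  have hEnD' : E ≠ -D' := fun h => hEl (by rw [hl8, h]; simp)
  obtain ⟨E', hE', hE'1, hE'2, hoE1, hoE2, hptE2, hptE⟩ := S.partner hdim hcard hE
  -- torsion criterion
  have htor : ∀ x : V,
      (-(QuotientAddGroup.mk x : V ⧸ S.corootLattice) = QuotientAddGroup.mk x)
        ↔ x + x ∈ S.corootLattice := by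
    intro x
    have hneg : -(QuotientAddGroup.mk x : V ⧸ S.corootLattice) = QuotientAddGroup.mk (-x) := rfl
    rw [hneg, QuotientAddGroup.eq, neg_neg]
  have hback : ∀ k l : ℤ, (k:ℝ) • S.coroot A + (l:ℝ) • S.coroot D ∈ S.corootLattice := by
    intro k l
    rw [Int.cast_smul_eq_zsmul, Int.cast_smul_eq_zsmul]
    exact add_mem (zsmul_mem (S.coroot_mem_lattice hA) k) (zsmul_mem (S.coroot_mem_lattice hD) l)
  have hhalf_tor : ∀ {γ : Module.Dual ℝ V} (hγ : γ ∈ S.R),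
      -(QuotientAddGroup.mk ((2⁻¹:ℝ) • S.coroot γ) : V ⧸ S.corootLattice) =
        QuotientAddGroup.mk ((2⁻¹:ℝ) • S.coroot γ) := by
    intro γ hγ
    rw [htor]
    have : (2⁻¹:ℝ) • S.coroot γ + (2⁻¹:ℝ) • S.coroot γ = S.coroot γ := by module
    rw [this]
    exact S.coroot_mem_lattice hγ
  -- the four 2-torsion points
  have hEset : {t : V ⧸ S.corootLattice | -t = t} =
      {0, QuotientAddGroup.mk ((2⁻¹:ℝ) • S.coroot A),
        QuotientAddGroup.mk ((2⁻¹:ℝ) • S.coroot D),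
        QuotientAddGroup.mk ((2⁻¹:ℝ) • (S.coroot A + S.coroot D))} := by
    apply Set.ext
    intro t
    constructor
    · intro ht
      obtain ⟨x, rfl⟩ := QuotientAddGroup.mk_surjective t
      have hx2 : x + x ∈ S.corootLattice := (htor x).mp ht
      obtain ⟨k, l, hkl⟩ := S.lattice_char hdim hcard hA hD hn hm hnm3 hDA hDnA hx2
      have hxeq : x = ((k:ℝ)/2) • S.coroot A + ((l:ℝ)/2) • S.coroot D := by
        calc x = (2⁻¹:ℝ) • (x + x) := by module
        _ = ((k:ℝ)/2) • S.coroot A + ((l:ℝ)/2) • S.coroot D := by rw [hkl]; module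
      simp only [Set.mem_insert_iff, Set.mem_singleton_iff]
      rcases Int.even_or_odd k with ⟨k', hk⟩ | ⟨k', hk⟩ <;>
        rcases Int.even_or_odd l with ⟨l', hl⟩ | ⟨l', hl⟩
      · -- even, even : t = 0
        left
        rw [QuotientAddGroup.eq_zero_iff]
        have hkR : (k:ℝ) = (k':ℝ) + (k':ℝ) := by exact_mod_cast hk
        have hlR : (l:ℝ) = (l':ℝ) + (l':ℝ) := by exact_mod_cast hl
        have hx : x = (k':ℝ) • S.coroot A + (l':ℝ) • S.coroot D := by
          rw [hxeq, hkR, hlR]; module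
        rw [hx]; exact hback k' l'
      · -- even, odd : t = [d/2]
        right; right; left
        rw [QuotientAddGroup.eq]
        have hkR : (k:ℝ) = (k':ℝ) + (k':ℝ) := by exact_mod_cast hk
        have hlR : (l:ℝ) = 2*(l':ℝ) + 1 := by exact_mod_cast hl
        have hx : -x + (2⁻¹:ℝ) • S.coroot D
            = ((-k' : ℤ):ℝ) • S.coroot A + ((-l' : ℤ):ℝ) • S.coroot D := by
          rw [hxeq, hkR, hlR]; push_cast; module
        rw [hx]; exact hback (-k') (-l')
      · -- odd, even : t = [a/2]
        right; left
        rw [QuotientAddGroup.eq]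
        have hkR : (k:ℝ) = 2*(k':ℝ) + 1 := by exact_mod_cast hk
        have hlR : (l:ℝ) = (l':ℝ) + (l':ℝ) := by exact_mod_cast hl
        have hx : -x + (2⁻¹:ℝ) • S.coroot A
            = ((-k' : ℤ):ℝ) • S.coroot A + ((-l' : ℤ):ℝ) • S.coroot D := by
          rw [hxeq, hkR, hlR]; push_cast; module
        rw [hx]; exact hback (-k') (-l')
      · -- odd, odd : t = [(a+d)/2]
        right; right; right
        rw [QuotientAddGroup.eq]
        have hkR : (k:ℝ) = 2*(k':ℝ) + 1 := by exact_mod_cast hk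
        have hlR : (l:ℝ) = 2*(l':ℝ) + 1 := by exact_mod_cast hl
        have hx : -x + (2⁻¹:ℝ) • (S.coroot A + S.coroot D)
            = ((-k' : ℤ):ℝ) • S.coroot A + ((-l' : ℤ):ℝ) • S.coroot D := by
          rw [hxeq, hkR, hlR]; push_cast; module
        rw [hx]; exact hback (-k') (-l')
    · intro ht
      simp only [Set.mem_insert_iff, Set.mem_singleton_iff] at ht
      rcases ht with rfl | rfl | rfl | rfl
      · show -(0 : V ⧸ S.corootLattice) = 0
        simp
      · exact hhalf_tor hA
      · exact hhalf_tor hD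
      · show _ = _
        rw [htor]
        have : (2⁻¹:ℝ) • (S.coroot A + S.coroot D) + (2⁻¹:ℝ) • (S.coroot A + S.coroot D)
            = S.coroot A + S.coroot D := by module
        rw [this]
        exact add_mem (S.coroot_mem_lattice hA) (S.coroot_mem_lattice hD)
  -- distinctness facts
  have hp1ne0 := S.half_coroot_ne_zero hdim hcard hA
  have hp2ne0 := S.half_coroot_ne_zero hdim hcard hD
  have hpEne0 := S.half_coroot_ne_zero hdim hcard hE
  have hne12 := S.half_coroot_ne hdim hcard hA hD hA' hptA hDA hDnA hDA' hDnA'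
  have hne1E := S.half_coroot_ne hdim hcard hA hE hA' hptA hEA hEnA hEA' hEnA'
  have hne2E := S.half_coroot_ne hdim hcard hD hE hD' hptD hED hEnD hED' hEnD'
  -- identification of the third point
  have htEmem : (QuotientAddGroup.mk ((2⁻¹:ℝ) • S.coroot E) : V ⧸ S.corootLattice)
      ∈ {t : V ⧸ S.corootLattice | -t = t} := hhalf_tor hE
  have htE3 : (QuotientAddGroup.mk ((2⁻¹:ℝ) • S.coroot E) : V ⧸ S.corootLattice)
      = QuotientAddGroup.mk ((2⁻¹:ℝ) • (S.coroot A + S.coroot D)) := by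
    rw [hEset] at htEmem
    simp only [Set.mem_insert_iff, Set.mem_singleton_iff] at htEmem
    rcases htEmem with h | h | h | h
    · exact absurd h hpEne0
    · exact absurd h.symm hne1E
    · exact absurd h.symm hne2E
    · exact h
  have hp3ne0 : (QuotientAddGroup.mk ((2⁻¹:ℝ) • (S.coroot A + S.coroot D))
      : V ⧸ S.corootLattice) ≠ 0 := htE3 ▸ hpEne0
  have hne13 : (QuotientAddGroup.mk ((2⁻¹:ℝ) • S.coroot A) : V ⧸ S.corootLattice)
      ≠ QuotientAddGroup.mk ((2⁻¹:ℝ) • (S.coroot A + S.coroot D)) := htE3 ▸ hne1E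
  have hne23 : (QuotientAddGroup.mk ((2⁻¹:ℝ) • S.coroot D) : V ⧸ S.corootLattice)
      ≠ QuotientAddGroup.mk ((2⁻¹:ℝ) • (S.coroot A + S.coroot D)) := htE3 ▸ hne2E
  -- (ii)
  have hii : {t : V ⧸ S.corootLattice | -t = t}.ncard = 4 := by
    rw [hEset]
    rw [Set.ncard_insert_of_notMem (by
      simp only [Set.mem_insert_iff, Set.mem_singleton_iff]
      push_neg
      exact ⟨fun h => hp1ne0 h.symm, fun h => hp2ne0 h.symm, fun h => hp3ne0 h.symm⟩)
      (Set.toFinite _)]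
    rw [Set.ncard_insert_of_notMem (by
      simp only [Set.mem_insert_iff, Set.mem_singleton_iff]
      push_neg
      exact ⟨hne12, hne13⟩) (Set.toFinite _)]
    rw [Set.ncard_pair hne23]
  -- main step for (iii)
  have part3 : ∀ (γ γ' : Module.Dual ℝ V) (hγ : γ ∈ S.R) (hγ' : γ' ∈ S.R),
      γ' ≠ γ → γ' ≠ -γ → γ' (S.coroot γ) = 0 → γ (S.coroot γ') = 0 →
      (∀ x, S.sE hγ (S.sE hγ' x) = -x) → (∀ x, S.sE hγ' x = -(S.sE hγ x)) →
      ({e : V ≃ₗ[ℝ] V | S.IsReflection e ∧ FixesInTorus S.corootLattice e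
          (QuotientAddGroup.mk ((2⁻¹:ℝ) • S.coroot γ))}.ncard = 2 ∧
        ∀ e₁ e₂ : V ≃ₗ[ℝ] V,
          e₁ ∈ {e : V ≃ₗ[ℝ] V | S.IsReflection e ∧ FixesInTorus S.corootLattice e
            (QuotientAddGroup.mk ((2⁻¹:ℝ) • S.coroot γ))} →
          e₂ ∈ {e : V ≃ₗ[ℝ] V | S.IsReflection e ∧ FixesInTorus S.corootLattice e
            (QuotientAddGroup.mk ((2⁻¹:ℝ) • S.coroot γ))} →
          e₁ ≠ e₂ → e₁ * e₂ = (LinearEquiv.neg ℝ : V ≃ₗ[ℝ] V)) := by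
    intro γ γ' hγ hγ' hne1 hne2 ho1 ho2 hpt2 hpt
    have hset := S.fix_set_eq hdim hcard hγ hγ' ho1 ho2 hpt
    have hnesE : S.sE hγ ≠ S.sE hγ' := by
      intro h
      have hpoint : ∀ x, x - γ x • S.coroot γ = x - γ' x • S.coroot γ' := by
        intro x
        have h1 : S.sE hγ x = S.sE hγ' x := by rw [h]
        simpa using h1
      rcases S.root_eq_of_refl_eq hγ hγ' hpoint with h3 | h3
      · exact hne1 h3
      · exact hne2 h3
    constructor
    · rw [hset]
      exact Set.ncard_pair hnesE
    · intro e₁ e₂ he₁ he₂ hne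
      rw [hset] at he₁ he₂
      rcases he₁ with rfl | rfl <;> rcases he₂ with rfl | rfl
      · exact absurd rfl hne
      · apply LinearEquiv.ext
        intro x
        show S.sE hγ (S.sE hγ' x) = -x
        exact hpt2 x
      · apply LinearEquiv.ext
        intro x
        show S.sE hγ' (S.sE hγ x) = -x
        rw [hpt (S.sE hγ x), S.sE_sE]
      · exact absurd rfl hne
  have hiii : ∀ t : V ⧸ S.corootLattice, -t = t → t ≠ 0 →
      ({e : V ≃ₗ[ℝ] V | S.IsReflection e ∧ FixesInTorus S.corootLattice e t}.ncard = 2 ∧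
        ∀ e₁ e₂ : V ≃ₗ[ℝ] V,
          e₁ ∈ {e : V ≃ₗ[ℝ] V | S.IsReflection e ∧ FixesInTorus S.corootLattice e t} →
          e₂ ∈ {e : V ≃ₗ[ℝ] V | S.IsReflection e ∧ FixesInTorus S.corootLattice e t} →
          e₁ ≠ e₂ → e₁ * e₂ = (LinearEquiv.neg ℝ : V ≃ₗ[ℝ] V)) := by
    intro t ht htne
    have hmem : t ∈ ({0, QuotientAddGroup.mk ((2⁻¹:ℝ) • S.coroot A),
        QuotientAddGroup.mk ((2⁻¹:ℝ) • S.coroot D),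
        QuotientAddGroup.mk ((2⁻¹:ℝ) • (S.coroot A + S.coroot D))}
        : Set (V ⧸ S.corootLattice)) := by
      rw [← hEset]; exact ht
    simp only [Set.mem_insert_iff, Set.mem_singleton_iff] at hmem
    rcases hmem with rfl | rfl | rfl | rfl
    · exact absurd rfl htne
    · exact part3 A A' hA hA' hA'1 hA'2 hoA1 hoA2 hptA2 hptA
    · exact part3 D D' hD hD' hD'1 hD'2 hoD1 hoD2 hptD2 hptD
    · rw [← htE3]
      exact part3 E E' hE hE' hE'1 hE'2 hoE1 hoE2 hptE2 hptE
  -- main step for (iv)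
  have part4 : ∀ (γ γ' δ δ' : Module.Dual ℝ V) (hγ : γ ∈ S.R) (hγ' : γ' ∈ S.R)
      (hδ : δ ∈ S.R) (hδ' : δ' ∈ S.R),
      γ' (S.coroot γ) = 0 → γ (S.coroot γ') = 0 → (∀ x, S.sE hγ' x = -(S.sE hγ x)) →
      δ' (S.coroot δ) = 0 → δ (S.coroot δ') = 0 → (∀ x, S.sE hδ' x = -(S.sE hδ x)) →
      δ ≠ γ → δ ≠ -γ → δ ≠ γ' → δ ≠ -γ' →
      {e : V ≃ₗ[ℝ] V | S.IsReflection e ∧ FixesInTorus S.corootLattice e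
          (QuotientAddGroup.mk ((2⁻¹:ℝ) • S.coroot γ))} ≠
        {e : V ≃ₗ[ℝ] V | S.IsReflection e ∧ FixesInTorus S.corootLattice e
          (QuotientAddGroup.mk ((2⁻¹:ℝ) • S.coroot δ))} := by
    intro γ γ' δ δ' hγ hγ' hδ hδ' hoγ1 hoγ2 hptγ hoδ1 hoδ2 hptδ hc1 hc2 hc3 hc4
    intro heq
    have h1 : S.sE hδ ∈ {e : V ≃ₗ[ℝ] V | S.IsReflection e ∧ FixesInTorus S.corootLattice e
        (QuotientAddGroup.mk ((2⁻¹:ℝ) • S.coroot δ))} := by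
      rw [S.fix_set_eq hdim hcard hδ hδ' hoδ1 hoδ2 hptδ]
      left; rfl
    rw [← heq, S.fix_set_eq hdim hcard hγ hγ' hoγ1 hoγ2 hptγ] at h1
    have hne : ∀ (ρ : Module.Dual ℝ V) (hρ : ρ ∈ S.R), S.sE hδ = S.sE hρ →
        δ = ρ ∨ δ = -ρ := by
      intro ρ hρ h
      have hpoint : ∀ x, x - ρ x • S.coroot ρ = x - δ x • S.coroot δ := by
        intro x
        have h1 : S.sE hρ x = S.sE hδ x := by rw [h]
        simpa using h1
      exact S.root_eq_of_refl_eq hρ hδ hpoint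
    rcases h1 with h | h
    · rcases hne γ hγ h with h2 | h2
      · exact hc1 h2
      · exact hc2 h2
    · rcases hne γ' hγ' h with h2 | h2
      · exact hc3 h2
      · exact hc4 h2
  have hiv : ∀ t t' : V ⧸ S.corootLattice, -t = t → -t' = t' → t ≠ 0 → t' ≠ 0 → t ≠ t' →
      {e : V ≃ₗ[ℝ] V | S.IsReflection e ∧ FixesInTorus S.corootLattice e t} ≠
        {e : V ≃ₗ[ℝ] V | S.IsReflection e ∧ FixesInTorus S.corootLattice e t'} := by
    have hAD := part4 A A' D D' hA hA' hD hD' hoA1 hoA2 hptA hoD1 hoD2 hptD hDA hDnA hDA' hDnA'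
    have hAE := part4 A A' E E' hA hA' hE hE' hoA1 hoA2 hptA hoE1 hoE2 hptE hEA hEnA hEA' hEnA'
    have hDE := part4 D D' E E' hD hD' hE hE' hoD1 hoD2 hptD hoE1 hoE2 hptE hED hEnD hED' hEnD'
    intro t t' ht ht' htne htne' hneq
    have hmem : t ∈ ({0, QuotientAddGroup.mk ((2⁻¹:ℝ) • S.coroot A),
        QuotientAddGroup.mk ((2⁻¹:ℝ) • S.coroot D),
        QuotientAddGroup.mk ((2⁻¹:ℝ) • (S.coroot A + S.coroot D))}
        : Set (V ⧸ S.corootLattice)) := by rw [← hEset]; exact ht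
    have hmem' : t' ∈ ({0, QuotientAddGroup.mk ((2⁻¹:ℝ) • S.coroot A),
        QuotientAddGroup.mk ((2⁻¹:ℝ) • S.coroot D),
        QuotientAddGroup.mk ((2⁻¹:ℝ) • (S.coroot A + S.coroot D))}
        : Set (V ⧸ S.corootLattice)) := by rw [← hEset]; exact ht'
    simp only [Set.mem_insert_iff, Set.mem_singleton_iff] at hmem hmem'
    rcases hmem with rfl | rfl | rfl | rfl
    · exact absurd rfl htne
    · rcases hmem' with rfl | rfl | rfl | rfl
      · exact absurd rfl htne'
      · exact absurd rfl hneq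
      · exact hAD
      · rw [← htE3]; exact hAE
    · rcases hmem' with rfl | rfl | rfl | rfl
      · exact absurd rfl htne'
      · exact hAD.symm
      · exact absurd rfl hneq
      · rw [← htE3]; exact hDE
    · rcases hmem' with rfl | rfl | rfl | rfl
      · exact absurd rfl htne'
      · rw [← htE3]; exact hAE.symm
      · rw [← htE3]; exact hDE.symm
      · exact absurd rfl hneq
  exact ⟨hi, hii, hiii, hiv⟩
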